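/- arXiv:2410.10052 — 4 statements merged into one kernel-verified Lean document; each statement's English description precedes it below -/
import Mathlib

section
/- Let a : ℝ → ℝ be twice differentiable with a''(ξ) > 0 for every ξ ∈ ℝ. Then for all ξ₁, ξ₂, ξ₃, ξ₄ ∈ ℝ one has ξ₁ - ξ₂ + ξ₃ - ξ₄ = 0 and a(ξ₁) - a(ξ₂) + a(ξ₃) - a(ξ₄) = 0 simultaneously if and only if (ξ₁ = ξ₂ and ξ₃ = ξ₄) or (ξ₁ = ξ₄ and ξ₃ = ξ₂). In other words, the resonant set ℛ = {ξ ∈ ℝ⁴ : Δ⁴ξ = 0 and Δ⁴a(ξ) = 0} coincides with the set where the unordered pair {ξ₁, ξ₃} equals the unordered pair {ξ₂, ξ₄}. -/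
private lemma key_resonant {a : ℝ → ℝ} (hc : StrictConvexOn ℝ Set.univ a)
    (ξ₁ ξ₂ ξ₃ ξ₄ : ℝ) (h12 : ξ₁ ≤ ξ₂) (h14 : ξ₁ ≤ ξ₄)
    (hs : ξ₁ + ξ₃ = ξ₂ + ξ₄) (hv : a ξ₁ + a ξ₃ = a ξ₂ + a ξ₄) :
    (ξ₁ = ξ₂ ∧ ξ₃ = ξ₄) ∨ (ξ₁ = ξ₄ ∧ ξ₃ = ξ₂) := by
  rcases eq_or_lt_of_le h12 with h | h
  · exact Or.inl ⟨h, by linarith⟩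
  rcases eq_or_lt_of_le h14 with h' | h'
  · exact Or.inr ⟨h', by linarith⟩
  -- ξ₁ < ξ₂ and ξ₁ < ξ₄, so ξ₂, ξ₄ strictly between ξ₁ and ξ₃
  have h23 : ξ₂ < ξ₃ := by linarith
  have h43 : ξ₄ < ξ₃ := by linarith
  have h13 : ξ₁ < ξ₃ := by linarith
  exfalso
  set t : ℝ := (ξ₃ - ξ₂) / (ξ₃ - ξ₁) with ht
  have hne : ξ₃ - ξ₁ ≠ 0 := by linarith
  have ht0 : 0 < t := div_pos (by linarith) (by linarith)
  have ht1 : t < 1 := (div_lt_one (by linarith)).2 (by linarith)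
  have hts : t + (1 - t) = 1 := by ring
  have h2eq : t * ξ₁ + (1 - t) * ξ₃ = ξ₂ := by
    have key : t * (ξ₃ - ξ₁) = ξ₃ - ξ₂ := div_mul_cancel₀ _ hne
    linear_combination -key
  have h4eq : (1 - t) * ξ₁ + t * ξ₃ = ξ₄ := by
    have : ξ₄ = ξ₁ + ξ₃ - ξ₂ := by linarith
    rw [this, ← h2eq]; ring
  have hA := hc.2 (Set.mem_univ ξ₁) (Set.mem_univ ξ₃) (ne_of_lt h13) ht0
    (by linarith : (0:ℝ) < 1 - t) hts
  have hB := hc.2 (Set.mem_univ ξ₁) (Set.mem_univ ξ₃) (ne_of_lt h13)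
    (by linarith : (0:ℝ) < 1 - t) ht0 (by ring)
  simp only [smul_eq_mul] at hA hB
  rw [h2eq] at hA
  rw [h4eq] at hB
  linarith

/-- The resonant set for a strictly convex dispersion relation `a`:
`ξ₁ - ξ₂ + ξ₃ - ξ₄ = 0` and `a ξ₁ - a ξ₂ + a ξ₃ - a ξ₄ = 0` hold simultaneously
iff the unordered pair `{ξ₁, ξ₃}` coincides with `{ξ₂, ξ₄}`. -/
theorem stmt_0 (a : ℝ → ℝ)
    (ha : Differentiable ℝ a) (ha' : Differentiable ℝ (deriv a))
    (hconv : ∀ ξ : ℝ, 0 < deriv (deriv a) ξ) :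
    ∀ ξ₁ ξ₂ ξ₃ ξ₄ : ℝ,
      (ξ₁ - ξ₂ + ξ₃ - ξ₄ = 0 ∧ a ξ₁ - a ξ₂ + a ξ₃ - a ξ₄ = 0) ↔
        ((ξ₁ = ξ₂ ∧ ξ₃ = ξ₄) ∨ (ξ₁ = ξ₄ ∧ ξ₃ = ξ₂)) := by
  have hc : StrictConvexOn ℝ Set.univ a := by
    apply strictConvexOn_of_deriv2_pos convex_univ ha.continuous.continuousOn
    intro x _
    simpa [Function.iterate_succ, Function.comp] using hconv x
  intro ξ₁ ξ₂ ξ₃ ξ₄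
  constructor
  · rintro ⟨hs, hv⟩
    rcases le_total ξ₁ ξ₃ with h13 | h13
    · rcases le_total ξ₁ ξ₂ with h12 | h12
      · -- ξ₁ is min of {ξ₁,ξ₂}; need ξ₁ ≤ ξ₄?
        rcases le_total ξ₁ ξ₄ with h14 | h14
        · exact key_resonant hc ξ₁ ξ₂ ξ₃ ξ₄ h12 h14 (by linarith) (by linarith)
        · -- ξ₄ is min: swap pairs, apply with (ξ₄, ξ₁, ξ₂, ξ₃)? use key with ξ₄ ξ₁ ξ₂ ξ₃
          have := key_resonant hc ξ₄ ξ₁ ξ₂ ξ₃ h14 (by linarith) (by linarith) (by linarith)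
          tauto
      · rcases le_total ξ₂ ξ₄ with h24 | h24
        · -- ξ₂ is min
          have := key_resonant hc ξ₂ ξ₁ ξ₄ ξ₃ h12 (by linarith) (by linarith) (by linarith)
          tauto
        · -- ξ₄ is min
          have := key_resonant hc ξ₄ ξ₁ ξ₂ ξ₃ (by linarith) (by linarith) (by linarith)
            (by linarith)
          tauto
    · rcases le_total ξ₃ ξ₂ with h32 | h32
      · rcases le_total ξ₃ ξ₄ with h34 | h34
        · -- ξ₃ is min
          have := key_resonant hc ξ₃ ξ₂ ξ₁ ξ₄ h32 h34 (by linarith) (by linarith)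
          tauto
        · have := key_resonant hc ξ₄ ξ₁ ξ₂ ξ₃ (by linarith) (by linarith) (by linarith)
            (by linarith)
          tauto
      · rcases le_total ξ₂ ξ₄ with h24 | h24
        · have := key_resonant hc ξ₂ ξ₁ ξ₄ ξ₃ (by linarith) (by linarith) (by linarith)
            (by linarith)
          tauto
        · have := key_resonant hc ξ₄ ξ₁ ξ₂ ξ₃ (by linarith) (by linarith) (by linarith)
            (by linarith)
          tauto
  · rintro (⟨h1, h2⟩ | ⟨h1, h2⟩) <;> subst h1 <;> subst h2 <;> constructor <;> ring
end

section
/- Let γ ∈ ℝ, λ ≥ 1, c₀ > 0, and let a : ℝ → ℝ be twice continuously differentiable with a''(ζ) ≥ c₀ λ^γ for all ζ ∈ [λ/2, 2λ]. Let φ : ℝ → ℂ be continuously differentiable, supported in [λ/2, 2λ], with |φ(ζ)| ≤ 1 for all ζ and ∫_ℝ |φ'(ζ)| dζ ≤ M. Then there is a universal constant C such that for all t ≠ 0 and all x ∈ ℝ: |∫_ℝ e^{i(xξ - t a(ξ))} φ(ξ) dξ| ≤ C (1+M)(c₀ |t| λ^γ)^{-1/2}. Consequently, for every f ∈ L¹(ℝ),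 the frequency-localized free evolution u(t,x) := (2π)^{-1}∫ e^{i(xξ - t a(ξ))} φ(ξ) f̂(ξ) dξ satisfies ‖u(t,·)‖_{L^∞(ℝ)} ≤ C(1+M) c₀^{-1/2} λ^{-γ/2} |t|^{-1/2} ‖f‖_{L¹(ℝ)} for all t ≠ 0. -/
open MeasureTheory Set

/-- Fourier transform with the convention `f̂(ξ) = ∫ e^{-ixξ} f(x) dx`. -/
noncomputable def FT (f : ℝ → ℂ) (ξ : ℝ) : ℂ :=
  ∫ x : ℝ, Complex.exp (-(Complex.I * (x : ℂ) * (ξ : ℂ))) * f x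

-- continuity facts
lemma cont_d1 {ψ : ℝ → ℝ} (h : ContDiff ℝ 2 ψ) : Continuous (deriv ψ) :=
  (h.iterate_deriv' 1 1).continuous

lemma cont_d2 {ψ : ℝ → ℝ} (h : ContDiff ℝ 2 ψ) : Continuous (deriv (deriv ψ)) :=
  ((h.iterate_deriv' 0 2).continuous)

lemma hasDeriv_d1 {ψ : ℝ → ℝ} (h : ContDiff ℝ 2 ψ) (ξ : ℝ) :
    HasDerivAt ψ (deriv ψ ξ) ξ :=
  ((h.differentiable (by norm_num)) ξ).hasDerivAt

lemma hasDeriv_d2 {ψ : ℝ → ℝ} (h : ContDiff ℝ 2 ψ) (ξ : ℝ) :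
    HasDerivAt (deriv ψ) (deriv (deriv ψ) ξ) ξ :=
  (((h.iterate_deriv' 1 1).differentiable (by norm_num)) ξ).hasDerivAt

lemma vdc_nonstat {ψ : ℝ → ℝ} (hψ : ContDiff ℝ 2 ψ) {δ : ℝ} (hδ : 0 < δ)
    {c d : ℝ} (hcd : c ≤ d)
    (hsign : (∀ ξ ∈ Icc c d, δ ≤ deriv ψ ξ) ∨ (∀ ξ ∈ Icc c d, deriv ψ ξ ≤ -δ))
    (hconv : ∀ ξ ∈ Icc c d, 0 ≤ deriv (deriv ψ) ξ) :
    ‖∫ ξ in c..d, Complex.exp (Complex.I * (ψ ξ : ℂ))‖ ≤ 3 / δ := by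
  have hne : ∀ ξ ∈ Icc c d, deriv ψ ξ ≠ 0 := by
    intro ξ hξ
    rcases hsign with h | h
    · exact ne_of_gt (lt_of_lt_of_le hδ (h ξ hξ))
    · exact ne_of_lt (lt_of_le_of_lt (h ξ hξ) (by linarith))
  have habs : ∀ ξ ∈ Icc c d, δ ≤ |deriv ψ ξ| := by
    intro ξ hξ
    rcases hsign with h | h
    · rw [abs_of_pos (lt_of_lt_of_le hδ (h ξ hξ))]; exact h ξ hξ
    · rw [abs_of_neg (lt_of_le_of_lt (h ξ hξ) (by linarith))]; linarith [h ξ hξ]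
  set u : ℝ → ℂ := fun ξ => (Complex.I * (Complex.ofReal (deriv ψ ξ)))⁻¹ with hu_def
  set v : ℝ → ℂ := fun ξ => Complex.exp (Complex.I * (ψ ξ : ℂ)) with hv_def
  have huIcc : Set.uIcc c d = Icc c d := uIcc_of_le hcd
  -- derivative of v
  have hv : ∀ ξ : ℝ, HasDerivAt v (Complex.exp (Complex.I * (ψ ξ : ℂ)) *
      (Complex.I * (Complex.ofReal (deriv ψ ξ)))) ξ := by
    intro ξ
    have h1 : HasDerivAt (fun ξ : ℝ => Complex.I * (ψ ξ : ℂ))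
        (Complex.I * (Complex.ofReal (deriv ψ ξ))) ξ :=
      ((hasDeriv_d1 hψ ξ).ofReal_comp).const_mul Complex.I
    exact h1.cexp
  -- derivative of u
  have hu : ∀ ξ ∈ Icc c d, HasDerivAt u
      (-((Complex.I * (Complex.ofReal (deriv ψ ξ))) ^ 2)⁻¹ *
        (Complex.I * (Complex.ofReal (deriv (deriv ψ) ξ)))) ξ := by
    intro ξ hξ
    have h1 : HasDerivAt (fun ξ : ℝ => Complex.I * (Complex.ofReal (deriv ψ ξ)))
        (Complex.I * (Complex.ofReal (deriv (deriv ψ) ξ))) ξ :=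
      ((hasDeriv_d2 hψ ξ).ofReal_comp).const_mul Complex.I
    have hne' : Complex.I * (Complex.ofReal (deriv ψ ξ)) ≠ 0 := by
      simp [Complex.I_ne_zero, Complex.ofReal_eq_zero, hne ξ hξ]
    exact (hasDerivAt_inv hne').comp ξ h1
  set u' : ℝ → ℂ := fun ξ => -((Complex.I * (Complex.ofReal (deriv ψ ξ))) ^ 2)⁻¹ *
    (Complex.I * (Complex.ofReal (deriv (deriv ψ) ξ))) with hu'_def
  set v' : ℝ → ℂ := fun ξ => Complex.exp (Complex.I * (ψ ξ : ℂ)) *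
    (Complex.I * (Complex.ofReal (deriv ψ ξ))) with hv'_def
  have hcont1 : Continuous (deriv ψ) := cont_d1 hψ
  have hcont2 : Continuous (deriv (deriv ψ)) := cont_d2 hψ
  have hcontu' : ContinuousOn u' (Set.uIcc c d) := by
    rw [huIcc]
    apply ContinuousOn.mul
    · apply ContinuousOn.neg
      apply ContinuousOn.inv₀
      · fun_prop
      · intro ξ hξ
        apply pow_ne_zero
        simp [Complex.I_ne_zero, Complex.ofReal_eq_zero, hne ξ hξ]
    · fun_prop
  have hintu' : IntervalIntegrable u' volume c d := hcontu'.intervalIntegrable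
  have hcont0 : Continuous ψ := hψ.continuous
  have hintv' : IntervalIntegrable v' volume c d := by
    apply Continuous.intervalIntegrable
    fun_prop
  have hibp := intervalIntegral.integral_mul_deriv_eq_deriv_mul
    (fun ξ hξ => hu ξ (huIcc ▸ hξ)) (fun ξ hξ => hv ξ) hintu' hintv'
  have hmain : ∫ ξ in c..d, Complex.exp (Complex.I * (ψ ξ : ℂ)) = ∫ ξ in c..d, u ξ * v' ξ := by
    apply intervalIntegral.integral_congr
    intro ξ hξ
    rw [huIcc] at hξ
    have hne' : Complex.I * (Complex.ofReal (deriv ψ ξ)) ≠ 0 := by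
      simp [Complex.I_ne_zero, Complex.ofReal_eq_zero, hne ξ hξ]
    simp only [hu_def, hv'_def]
    rw [mul_comm (Complex.exp _), inv_mul_cancel_left₀ hne']
  rw [hmain, hibp]
  -- norms of boundary terms
  have hnu : ∀ ξ ∈ Icc c d, ‖u ξ‖ ≤ 1 / δ := by
    intro ξ hξ
    rw [hu_def]
    simp only [norm_inv, norm_mul, Complex.norm_I, Complex.norm_real, one_mul,
      Real.norm_eq_abs]
    rw [one_div]
    exact inv_anti₀ hδ (habs ξ hξ)
  have hnv : ∀ ξ : ℝ, ‖v ξ‖ = 1 := by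
    intro ξ
    rw [hv_def]
    simp [Complex.norm_exp]
  -- the u' * v integral
  have hkey : ‖∫ ξ in c..d, u' ξ * v ξ‖ ≤ 1 / δ := by
    have hb : ∀ ξ ∈ Icc c d, ‖u' ξ * v ξ‖ =
        deriv (deriv ψ) ξ / (deriv ψ ξ) ^ 2 := by
      intro ξ hξ
      rw [norm_mul, hnv ξ, mul_one, hu'_def]
      simp only [norm_neg, norm_inv, norm_pow, norm_mul, Complex.norm_I,
        Complex.norm_real, one_mul, Real.norm_eq_abs]
      rw [abs_of_nonneg (hconv ξ hξ), div_eq_mul_inv, mul_comm, sq_abs]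
    have heqn : ∫ ξ in c..d, ‖u' ξ * v ξ‖ =
        ∫ ξ in c..d, deriv (deriv ψ) ξ / (deriv ψ ξ) ^ 2 := by
      apply intervalIntegral.integral_congr
      intro ξ hξ
      exact hb ξ (huIcc ▸ hξ)
    have hftc : ∫ ξ in c..d, deriv (deriv ψ) ξ / (deriv ψ ξ) ^ 2 =
        (deriv ψ c)⁻¹ - (deriv ψ d)⁻¹ := by
      have : ∀ ξ ∈ Set.uIcc c d, HasDerivAt (fun ζ => -(deriv ψ ζ)⁻¹)
          (deriv (deriv ψ) ξ / (deriv ψ ξ) ^ 2) ξ := by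
        intro ξ hξ
        rw [huIcc] at hξ
        have h := ((hasDeriv_d2 hψ ξ).inv (hne ξ hξ)).neg
        exact h.congr_deriv (by ring)
      rw [intervalIntegral.integral_eq_sub_of_hasDerivAt this]
      · ring
      · apply ContinuousOn.intervalIntegrable
        rw [huIcc]
        apply ContinuousOn.div
        · fun_prop
        · fun_prop
        · intro ξ hξ
          exact pow_ne_zero _ (hne ξ hξ)
    have hub : (deriv ψ c)⁻¹ - (deriv ψ d)⁻¹ ≤ 1 / δ := by
      have hcmem : c ∈ Icc c d := ⟨le_refl c, hcd⟩
      have hdmem : d ∈ Icc c d := ⟨hcd, le_refl d⟩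
      rcases hsign with h | h
      · have h1 : (deriv ψ c)⁻¹ ≤ 1 / δ := by
          rw [one_div]
          exact inv_anti₀ hδ (h c hcmem)
        have h2 : 0 < (deriv ψ d)⁻¹ := inv_pos.mpr (lt_of_lt_of_le hδ (h d hdmem))
        linarith
      · have h1 : (deriv ψ c)⁻¹ < 0 := inv_neg''.mpr (lt_of_le_of_lt (h c hcmem) (by linarith))
        have h2 : -(deriv ψ d)⁻¹ ≤ 1 / δ := by
          have hd0 : δ ≤ -(deriv ψ d) := by linarith [h d hdmem]
          have : (-(deriv ψ d))⁻¹ ≤ 1 / δ := by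
            rw [one_div]
            exact inv_anti₀ hδ hd0
          rw [inv_neg] at this
          linarith
        linarith
    calc ‖∫ ξ in c..d, u' ξ * v ξ‖ ≤ ∫ ξ in c..d, ‖u' ξ * v ξ‖ :=
          intervalIntegral.norm_integral_le_integral_norm hcd
      _ ≤ 1 / δ := by rw [heqn, hftc]; exact hub
  have hud : ‖u d * v d‖ ≤ 1 / δ := by
    rw [norm_mul, hnv d, mul_one]
    exact hnu d ⟨hcd, le_refl d⟩
  have huc : ‖u c * v c‖ ≤ 1 / δ := by
    rw [norm_mul, hnv c, mul_one]
    exact hnu c ⟨le_refl c, hcd⟩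
  calc ‖u d * v d - u c * v c - ∫ ξ in c..d, u' ξ * v ξ‖
      ≤ ‖u d * v d - u c * v c‖ + ‖∫ ξ in c..d, u' ξ * v ξ‖ := norm_sub_le _ _
    _ ≤ (‖u d * v d‖ + ‖u c * v c‖) + ‖∫ ξ in c..d, u' ξ * v ξ‖ := by
        gcongr; exact norm_sub_le _ _
    _ ≤ (1 / δ + 1 / δ) + 1 / δ := by gcongr
    _ = 3 / δ := by ring

lemma vdc {ψ : ℝ → ℝ} (hψ : ContDiff ℝ 2 ψ) {A : ℝ} (hA : 0 < A) {a b : ℝ} (hab : a ≤ b)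
    (hconv : ∀ ξ ∈ Icc a b, A ≤ deriv (deriv ψ) ξ) :
    ‖∫ ξ in a..b, Complex.exp (Complex.I * (ψ ξ : ℂ))‖ ≤ 8 / Real.sqrt A := by
  set δ := Real.sqrt A with hδ_def
  have hδ : 0 < δ := Real.sqrt_pos.mpr hA
  have hδ2 : δ ^ 2 = A := Real.sq_sqrt hA.le
  have hconv' : ∀ ξ ∈ Icc a b, 0 ≤ deriv (deriv ψ) ξ :=
    fun ξ hξ => le_trans hA.le (hconv ξ hξ)
  have hcont1 : Continuous (deriv ψ) := cont_d1 hψ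
  have hmono : MonotoneOn (deriv ψ) (Icc a b) := by
    apply monotoneOn_of_deriv_nonneg (convex_Icc a b) hcont1.continuousOn
    · exact ((hψ.iterate_deriv' 1 1).differentiable (by norm_num)).differentiableOn
    · intro x hx
      rw [interior_Icc] at hx
      exact hconv' x ⟨hx.1.le, hx.2.le⟩
  have hci : ∀ p q : ℝ, IntervalIntegrable (fun ξ => Complex.exp (Complex.I * (ψ ξ : ℂ)))
      volume p q := by
    intro p q
    apply Continuous.intervalIntegrable
    exact Complex.continuous_exp.comp
      (continuous_const.mul (Complex.continuous_ofReal.comp hψ.continuous))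
  have h38 : (3:ℝ) / δ ≤ 8 / δ := by gcongr <;> norm_num
  by_cases hb1 : deriv ψ b ≤ -δ
  · refine le_trans (vdc_nonstat hψ hδ hab (Or.inr ?_) hconv') h38
    intro ξ hξ
    exact le_trans (hmono hξ ⟨hab, le_refl b⟩ hξ.2) hb1
  by_cases ha1 : δ ≤ deriv ψ a
  · refine le_trans (vdc_nonstat hψ hδ hab (Or.inl ?_) hconv') h38
    intro ξ hξ
    exact le_trans ha1 (hmono ⟨le_refl a, hab⟩ hξ hξ.1)
  push_neg at hb1 ha1
  -- find u
  obtain ⟨u, huab, hul, hur, hubound⟩ :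
      ∃ u, u ∈ Icc a b ∧ -δ ≤ deriv ψ u ∧ (deriv ψ u ≤ -δ ∨ u = a) ∧
        ‖∫ ξ in a..u, Complex.exp (Complex.I * (ψ ξ : ℂ))‖ ≤ 3 / δ := by
    rcases le_or_gt (-δ) (deriv ψ a) with hua | hua
    · exact ⟨a, ⟨le_refl a, hab⟩, hua, Or.inr rfl, by simp; positivity⟩
    · have hIVT := intermediate_value_Icc hab hcont1.continuousOn
      have hmem : -δ ∈ Icc (deriv ψ a) (deriv ψ b) := ⟨hua.le, hb1.le⟩
      obtain ⟨u, huab, hu⟩ := hIVT hmem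
      refine ⟨u, huab, hu.ge, Or.inl hu.le, ?_⟩
      apply vdc_nonstat hψ hδ huab.1 (Or.inr ?_)
      · intro ξ hξ
        exact hconv' ξ ⟨hξ.1, le_trans hξ.2 huab.2⟩
      · intro ξ hξ
        have := hmono ⟨hξ.1, le_trans hξ.2 huab.2⟩ huab hξ.2
        rw [hu] at this
        exact this
  -- find v
  obtain ⟨v, hvab, hvl, hvr, hvbound⟩ :
      ∃ v, v ∈ Icc a b ∧ deriv ψ v ≤ δ ∧ (δ ≤ deriv ψ v ∨ v = b) ∧
        ‖∫ ξ in v..b, Complex.exp (Complex.I * (ψ ξ : ℂ))‖ ≤ 3 / δ := by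
    rcases le_or_gt (deriv ψ b) δ with hvb | hvb
    · exact ⟨b, ⟨hab, le_refl b⟩, hvb, Or.inr rfl, by simp; positivity⟩
    · have hIVT := intermediate_value_Icc hab hcont1.continuousOn
      have hmem : δ ∈ Icc (deriv ψ a) (deriv ψ b) := ⟨ha1.le, hvb.le⟩
      obtain ⟨v, hvab, hv⟩ := hIVT hmem
      refine ⟨v, hvab, hv.le, Or.inl hv.ge, ?_⟩
      apply vdc_nonstat hψ hδ hvab.2 (Or.inl ?_)
      · intro ξ hξ
        exact hconv' ξ ⟨le_trans hvab.1 hξ.1, hξ.2⟩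
      · intro ξ hξ
        have := hmono hvab ⟨le_trans hvab.1 hξ.1, hξ.2⟩ hξ.1
        rw [hv] at this
        exact this
  have huv : u ≤ v := by
    rcases hur with hur | rfl
    · rcases hvr with hvr | rfl
      · by_contra hlt
        push_neg at hlt
        have := hmono hvab huab hlt.le
        linarith
      · exact huab.2
    · exact hvab.1
  -- length of middle interval
  have hlen : v - u ≤ 2 / δ := by
    have hmono2 : MonotoneOn (fun ξ => deriv ψ ξ - A * ξ) (Icc a b) := by
      apply monotoneOn_of_deriv_nonneg (convex_Icc a b)
      · exact (hcont1.sub (continuous_const.mul continuous_id)).continuousOn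
      · apply DifferentiableOn.sub
        · exact ((hψ.iterate_deriv' 1 1).differentiable (by norm_num)).differentiableOn
        · exact (differentiable_const _|>.mul differentiable_id).differentiableOn
      · intro x hx
        rw [interior_Icc] at hx
        have hd : deriv (fun ξ => deriv ψ ξ - A * ξ) x = deriv (deriv ψ) x - A := by
          have := ((hasDeriv_d2 hψ x).sub ((hasDerivAt_id x).const_mul A)).deriv
          rw [show (fun ξ => deriv ψ ξ - A * ξ) = deriv ψ - fun y => A * id y from rfl, this]
          ring
        rw [hd]
        have := hconv x ⟨hx.1.le, hx.2.le⟩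
        linarith
    have h1 := hmono2 huab hvab huv
    simp only at h1
    have h2 : A * (v - u) ≤ 2 * δ := by nlinarith
    rw [← hδ2] at h2
    rw [div_eq_mul_inv]
    nlinarith [mul_pos hδ hδ, mul_inv_cancel₀ (ne_of_gt hδ), sq_nonneg δ]
  have hmid : ‖∫ ξ in u..v, Complex.exp (Complex.I * (ψ ξ : ℂ))‖ ≤ 2 / δ := by
    have := intervalIntegral.norm_integral_le_of_norm_le_const
      (C := 1) (f := fun ξ => Complex.exp (Complex.I * (ψ ξ : ℂ))) (a := u) (b := v) ?_
    · calc ‖∫ ξ in u..v, Complex.exp (Complex.I * (ψ ξ : ℂ))‖ ≤ 1 * |v - u| := this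
        _ = v - u := by rw [one_mul, abs_of_nonneg (by linarith)]
        _ ≤ 2 / δ := hlen
    · intro x _
      simp [Complex.norm_exp]
  -- combine
  have hsplit : ∫ ξ in a..b, Complex.exp (Complex.I * (ψ ξ : ℂ)) =
      (∫ ξ in a..u, Complex.exp (Complex.I * (ψ ξ : ℂ))) +
      (∫ ξ in u..v, Complex.exp (Complex.I * (ψ ξ : ℂ))) +
      (∫ ξ in v..b, Complex.exp (Complex.I * (ψ ξ : ℂ))) := by
    rw [intervalIntegral.integral_add_adjacent_intervals (hci a u) (hci u v),
      intervalIntegral.integral_add_adjacent_intervals (hci a v) (hci v b)]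
  rw [hsplit]
  calc ‖_ + _ + _‖ ≤ ‖_ + _‖ + ‖_‖ := norm_add_le _ _
    _ ≤ ‖_‖ + ‖_‖ + ‖_‖ := by gcongr; exact norm_add_le _ _
    _ ≤ 3 / δ + 2 / δ + 3 / δ := by gcongr
    _ = 8 / δ := by ring

lemma endpoint_zero {φ : ℝ → ℂ} (hc : Continuous φ) {a b : ℝ}
    (hsupp : Function.support φ ⊆ Icc a b) : φ a = 0 ∧ φ b = 0 := by
  have hclosed : IsClosed {x : ℝ | φ x = 0} := isClosed_eq hc continuous_const
  have hsub : ∀ x : ℝ, x ∉ Icc a b → φ x = 0 := by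
    intro x hx
    by_contra h
    exact hx (hsupp h)
  constructor
  · have h1 : Iio a ⊆ {x : ℝ | φ x = 0} := by
      intro x hx
      exact hsub x (fun hm => absurd hm.1 (not_le.mpr hx))
    have h2 : a ∈ closure (Iio a) := by simp [closure_Iio]
    exact (hclosed.closure_subset_iff.mpr h1) h2
  · have h1 : Ioi b ⊆ {x : ℝ | φ x = 0} := by
      intro x hx
      exact hsub x (fun hm => absurd hm.2 (not_le.mpr hx))
    have h2 : b ∈ closure (Ioi b) := by simp [closure_Ioi]
    exact (hclosed.closure_subset_iff.mpr h1) h2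

lemma vdc_amp {ψ : ℝ → ℝ} (hψ : ContDiff ℝ 2 ψ) {A : ℝ} (hA : 0 < A) {a b : ℝ} (hab : a ≤ b)
    (hconv : ∀ ξ ∈ Icc a b, A ≤ deriv (deriv ψ) ξ)
    {φ : ℝ → ℂ} (hφ : ContDiff ℝ 1 φ) (hsupp : Function.support φ ⊆ Icc a b) :
    ‖∫ ξ : ℝ, Complex.exp (Complex.I * (ψ ξ : ℂ)) * φ ξ‖ ≤
      (8 / Real.sqrt A) * ∫ ξ : ℝ, ‖deriv φ ξ‖ := by
  have hδ : 0 < Real.sqrt A := Real.sqrt_pos.mpr hA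
  have hsub0 : ∀ x : ℝ, x ∉ Icc a b → φ x = 0 := by
    intro x hx; by_contra h; exact hx (hsupp h)
  obtain ⟨hφa, hφb⟩ := endpoint_zero hφ.continuous hsupp
  have hcexp : Continuous (fun ξ : ℝ => Complex.exp (Complex.I * (ψ ξ : ℂ))) :=
    Complex.continuous_exp.comp
      (continuous_const.mul (Complex.continuous_ofReal.comp hψ.continuous))
  have hci : ∀ p q : ℝ, IntervalIntegrable (fun ξ => Complex.exp (Complex.I * (ψ ξ : ℂ)))
      volume p q := fun p q => hcexp.intervalIntegrable p q
  -- compact support facts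
  have hcs : HasCompactSupport φ := by
    apply HasCompactSupport.intro isCompact_Icc hsub0
  have hcsd : HasCompactSupport (deriv φ) := hcs.deriv
  have hcd : Continuous (deriv φ) := hφ.continuous_deriv le_rfl
  have hintd : Integrable (fun ξ : ℝ => ‖deriv φ ξ‖) := (hcd.integrable_of_hasCompactSupport hcsd).norm
  -- reduce to interval integral
  have hred : ∫ ξ : ℝ, Complex.exp (Complex.I * (ψ ξ : ℂ)) * φ ξ =
      ∫ ξ in a..b, Complex.exp (Complex.I * (ψ ξ : ℂ)) * φ ξ := by
    rw [intervalIntegral.integral_of_le hab]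
    symm
    apply setIntegral_eq_integral_of_forall_compl_eq_zero
    intro x hx
    rcases le_or_gt x a with h1 | h1
    · rcases eq_or_lt_of_le h1 with rfl | h1
      · rw [hφa, mul_zero]
      · rw [hsub0 x (fun hm => absurd hm.1 (not_le.mpr h1)), mul_zero]
    · have h2 : b < x := by
        by_contra h2
        exact hx ⟨h1, not_lt.mp h2⟩
      rw [hsub0 x (fun hm => absurd hm.2 (not_le.mpr h2)), mul_zero]
  -- primitive
  set F : ℝ → ℂ := fun ξ => ∫ s in a..ξ, Complex.exp (Complex.I * (ψ s : ℂ)) with hF_def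
  have hFd : ∀ ξ : ℝ, HasDerivAt F (Complex.exp (Complex.I * (ψ ξ : ℂ))) ξ := by
    intro ξ
    exact intervalIntegral.integral_hasDerivAt_right (hci a ξ)
      (hcexp.stronglyMeasurableAtFilter _ _) hcexp.continuousAt
  have hFb : ∀ ξ ∈ Icc a b, ‖F ξ‖ ≤ 8 / Real.sqrt A := by
    intro ξ hξ
    exact vdc hψ hA hξ.1 (fun s hs => hconv s ⟨hs.1, le_trans hs.2 hξ.2⟩)
  have hφd : ∀ x ∈ Set.uIcc a b, HasDerivAt φ (deriv φ x) x :=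
    fun x _ => ((hφ.differentiable (by norm_num)) x).hasDerivAt
  have hibp := intervalIntegral.integral_mul_deriv_eq_deriv_mul
    hφd (fun x _ => hFd x) (hcd.intervalIntegrable a b) (hci a b)
  have hFa : F a = 0 := by simp [hF_def]
  have hcomm : ∫ ξ in a..b, Complex.exp (Complex.I * (ψ ξ : ℂ)) * φ ξ =
      ∫ ξ in a..b, φ ξ * Complex.exp (Complex.I * (ψ ξ : ℂ)) := by
    apply intervalIntegral.integral_congr
    intro ξ _
    ring
  rw [hred, hcomm, hibp, hφa, hφb, hFa, zero_mul, mul_zero, sub_zero, zero_sub, norm_neg]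
  -- final bound
  have hdF : Differentiable ℝ F := fun ξ => (hFd ξ).differentiableAt
  have hcF : Continuous F := hdF.continuous
  have hstep1 : ‖∫ ξ in a..b, deriv φ ξ * F ξ‖ ≤ ∫ ξ in a..b, ‖deriv φ ξ * F ξ‖ :=
    intervalIntegral.norm_integral_le_integral_norm hab
  have hstep2 : ∫ ξ in a..b, ‖deriv φ ξ * F ξ‖ ≤
      ∫ ξ in a..b, ‖deriv φ ξ‖ * (8 / Real.sqrt A) := by
    apply intervalIntegral.integral_mono_on hab
    · exact ((hcd.norm.mul hcF.norm).congr (fun x => (norm_mul _ _).symm)).intervalIntegrable a b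
    · exact (hcd.norm.mul continuous_const).intervalIntegrable a b
    · intro ξ hξ
      rw [norm_mul]
      exact mul_le_mul_of_nonneg_left (hFb ξ hξ) (norm_nonneg _)
  have hstep3 : ∫ ξ in a..b, ‖deriv φ ξ‖ * (8 / Real.sqrt A) =
      (8 / Real.sqrt A) * ∫ ξ in a..b, ‖deriv φ ξ‖ := by
    rw [intervalIntegral.integral_mul_const]
    ring
  have hstep4 : ∫ ξ in a..b, ‖deriv φ ξ‖ ≤ ∫ ξ : ℝ, ‖deriv φ ξ‖ := by
    rw [intervalIntegral.integral_of_le hab]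
    apply setIntegral_le_integral hintd
    filter_upwards with x using norm_nonneg _
  calc ‖∫ ξ in a..b, deriv φ ξ * F ξ‖ ≤ ∫ ξ in a..b, ‖deriv φ ξ‖ * (8 / Real.sqrt A) :=
        le_trans hstep1 hstep2
    _ = (8 / Real.sqrt A) * ∫ ξ in a..b, ‖deriv φ ξ‖ := hstep3
    _ ≤ (8 / Real.sqrt A) * ∫ ξ : ℝ, ‖deriv φ ξ‖ := by
        apply mul_le_mul_of_nonneg_left hstep4
        positivity

lemma kernel_neg {a : ℝ → ℝ} (ha : ContDiff ℝ 2 a) {A₀ : ℝ} (hA₀ : 0 < A₀)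
    {p q : ℝ} (hpq : p ≤ q) (hconv : ∀ ζ ∈ Icc p q, A₀ ≤ deriv (deriv a) ζ)
    {φ : ℝ → ℂ} (hφ : ContDiff ℝ 1 φ) (hsupp : Function.support φ ⊆ Icc p q)
    {t : ℝ} (ht : t < 0) (x : ℝ) :
    ‖∫ ξ : ℝ, Complex.exp (Complex.I * ((x : ℂ) * (ξ : ℂ) - (t : ℂ) * (a ξ : ℂ))) * φ ξ‖ ≤
      (8 / Real.sqrt (|t| * A₀)) * ∫ ξ : ℝ, ‖deriv φ ξ‖ := by
  set ψ : ℝ → ℝ := fun ξ => x * ξ - t * a ξ with hψ_def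
  have hψ2 : ContDiff ℝ 2 ψ :=
    (contDiff_const.mul contDiff_id).sub (contDiff_const.mul ha)
  have hd1 : ∀ ξ : ℝ, HasDerivAt ψ (x - t * deriv a ξ) ξ := by
    intro ξ
    have h1 := (hasDerivAt_id ξ).const_mul x
    have h2 := (((ha.differentiable (by norm_num)) ξ).hasDerivAt).const_mul t
    exact (h1.sub h2).congr_deriv (by ring)
  have hderψ : deriv ψ = fun ξ => x - t * deriv a ξ := funext fun ξ => (hd1 ξ).deriv
  have hd2 : ∀ ξ : ℝ, deriv (deriv ψ) ξ = -(t * deriv (deriv a) ξ) := by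
    intro ξ
    rw [hderψ]
    have h2 := ((hasDeriv_d2 ha ξ).const_mul t).const_sub x
    simpa using h2.deriv
  have hA : 0 < |t| * A₀ := mul_pos (abs_pos.mpr ht.ne) hA₀
  have hconv2 : ∀ ζ ∈ Icc p q, |t| * A₀ ≤ deriv (deriv ψ) ζ := by
    intro ζ hζ
    rw [hd2, abs_of_neg ht]
    have := mul_le_mul_of_nonneg_left (hconv ζ hζ) (by linarith : (0:ℝ) ≤ -t)
    linarith
  have heq : (fun ξ : ℝ => Complex.exp (Complex.I * ((x : ℂ) * (ξ : ℂ) - (t : ℂ) * (a ξ : ℂ)))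
      * φ ξ) = fun ξ => Complex.exp (Complex.I * (ψ ξ : ℂ)) * φ ξ := by
    funext ξ
    rw [hψ_def]
    push_cast
    ring_nf
  rw [heq]
  exact vdc_amp hψ2 hA hpq hconv2 hφ hsupp

lemma kernel_bound {a : ℝ → ℝ} (ha : ContDiff ℝ 2 a) {A₀ : ℝ} (hA₀ : 0 < A₀)
    {p q : ℝ} (hpq : p ≤ q) (hconv : ∀ ζ ∈ Icc p q, A₀ ≤ deriv (deriv a) ζ)
    {φ : ℝ → ℂ} (hφ : ContDiff ℝ 1 φ) (hsupp : Function.support φ ⊆ Icc p q)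
    {t : ℝ} (ht : t ≠ 0) (x : ℝ) :
    ‖∫ ξ : ℝ, Complex.exp (Complex.I * ((x : ℂ) * (ξ : ℂ) - (t : ℂ) * (a ξ : ℂ))) * φ ξ‖ ≤
      (8 / Real.sqrt (|t| * A₀)) * ∫ ξ : ℝ, ‖deriv φ ξ‖ := by
  rcases lt_or_gt_of_ne ht with ht' | ht'
  · exact kernel_neg ha hA₀ hpq hconv hφ hsupp ht' x
  -- t > 0 : conjugate
  set φ₂ : ℝ → ℂ := fun ξ => (starRingEnd ℂ) (φ ξ) with hφ₂_def
  have hφ₂ : ContDiff ℝ 1 φ₂ := by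
    have := Complex.conjCLE.toContinuousLinearMap.contDiff.comp hφ
    convert this using 1
    ext ξ
    simp [hφ₂_def]
  have hsupp₂ : Function.support φ₂ ⊆ Icc p q := by
    intro ξ hξ
    apply hsupp
    intro h0
    exact hξ (by simp [hφ₂_def, h0])
  have hderφ₂ : ∀ ξ : ℝ, deriv φ₂ ξ = (starRingEnd ℂ) (deriv φ ξ) := by
    intro ξ
    exact deriv.star
  have hconj : ‖∫ ξ : ℝ, Complex.exp (Complex.I * ((x : ℂ) * (ξ : ℂ) - (t : ℂ) * (a ξ : ℂ)))
      * φ ξ‖ = ‖∫ ξ : ℝ, Complex.exp (Complex.I * (((-x : ℝ) : ℂ) * (ξ : ℂ) -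
        ((-t : ℝ) : ℂ) * (a ξ : ℂ))) * φ₂ ξ‖ := by
    have hconv' : (∫ ξ : ℝ, Complex.exp (Complex.I * (((-x : ℝ) : ℂ) * (ξ : ℂ) -
        ((-t : ℝ) : ℂ) * (a ξ : ℂ))) * φ₂ ξ) = (starRingEnd ℂ)
        (∫ ξ : ℝ, Complex.exp (Complex.I * ((x : ℂ) * (ξ : ℂ) - (t : ℂ) * (a ξ : ℂ))) * φ ξ) := by
      rw [← integral_conj]
      congr 1
      funext ξ
      rw [map_mul, ← Complex.exp_conj]
      have hc : (starRingEnd ℂ) (Complex.I * ((x : ℂ) * (ξ : ℂ) - (t : ℂ) * (a ξ : ℂ))) =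
          Complex.I * (((-x : ℝ) : ℂ) * (ξ : ℂ) - ((-t : ℝ) : ℂ) * (a ξ : ℂ)) := by
        simp [map_mul, map_sub, Complex.conj_I, Complex.conj_ofReal]
        push_cast
        ring
      rw [hc, hφ₂_def]
    rw [hconv', RCLike.norm_conj]
  rw [hconj]
  have h := kernel_neg ha hA₀ hpq hconv hφ₂ hsupp₂ (by linarith : (-t) < 0) (-x)
  rw [abs_neg] at h
  refine le_trans h ?_
  apply mul_le_mul_of_nonneg_left _ (by positivity)
  apply le_of_eq
  apply MeasureTheory.integral_congr_ae
  filter_upwards with ξ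
  rw [hderφ₂ ξ, RCLike.norm_conj]

/-- Dispersive decay for the frequency-localized linear flow: a van der Corput bound
`|∫ e^{i(xξ - t a(ξ))} φ(ξ) dξ| ≤ C (1+M)(c₀|t|λ^γ)^{-1/2}` for a `C¹` cutoff `φ`
supported in `[λ/2, 2λ]` with `|φ| ≤ 1`, `∫|φ'| ≤ M`, under the convexity bound
`a'' ≥ c₀λ^γ` there; consequently the frequency-localized free evolution satisfies
`‖e^{itA(D)}u_λ‖_{L^∞} ≤ C(1+M) c₀^{-1/2} λ^{-γ/2} |t|^{-1/2} ‖f‖_{L¹}`. -/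
theorem stmt_12 :
    ∃ C : ℝ, 0 < C ∧
      ∀ (γ lam c₀ : ℝ), 1 ≤ lam → 0 < c₀ →
      ∀ a : ℝ → ℝ, ContDiff ℝ 2 a →
      (∀ ζ ∈ Icc (lam / 2) (2 * lam), c₀ * lam ^ γ ≤ deriv (deriv a) ζ) →
      ∀ φ : ℝ → ℂ, ContDiff ℝ 1 φ →
        Function.support φ ⊆ Icc (lam / 2) (2 * lam) →
        (∀ ζ : ℝ, ‖φ ζ‖ ≤ 1) →
      ∀ M : ℝ, (∫ ζ : ℝ, ‖deriv φ ζ‖) ≤ M →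
      (∀ t x : ℝ, t ≠ 0 →
          ‖∫ ξ : ℝ, Complex.exp (Complex.I * ((x : ℂ) * (ξ : ℂ) - (t : ℂ) * (a ξ : ℂ))) * φ ξ‖ ≤
            C * (1 + M) * (c₀ * |t| * lam ^ γ) ^ (-(1/2) : ℝ)) ∧
      ∀ f : ℝ → ℂ, Integrable f → ∀ t x : ℝ, t ≠ 0 →
          ‖((2 * Real.pi : ℝ) : ℂ)⁻¹ *
              ∫ ξ : ℝ, Complex.exp (Complex.I * ((x : ℂ) * (ξ : ℂ) - (t : ℂ) * (a ξ : ℂ))) *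
                φ ξ * FT f ξ‖ ≤
            C * (1 + M) * c₀ ^ (-(1/2) : ℝ) * lam ^ (-γ / 2) * |t| ^ (-(1/2) : ℝ) *
              ∫ x' : ℝ, ‖f x'‖ := by
  refine ⟨8, by norm_num, ?_⟩
  intro γ lam c₀ hlam hc₀ a ha hconv φ hφ hsupp hφ1 M hM
  set p := lam / 2 with hp_def
  set q := 2 * lam with hq_def
  have hpq : p ≤ q := by rw [hp_def, hq_def]; linarith
  have hA₀ : 0 < c₀ * lam ^ γ := mul_pos hc₀ (Real.rpow_pos_of_pos (by linarith) γ)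
  have hM0 : 0 ≤ M := le_trans (integral_nonneg (fun ξ => norm_nonneg _)) hM
  -- part 1 as a reusable claim
  have part1 : ∀ t x : ℝ, t ≠ 0 →
      ‖∫ ξ : ℝ, Complex.exp (Complex.I * ((x : ℂ) * (ξ : ℂ) - (t : ℂ) * (a ξ : ℂ))) * φ ξ‖ ≤
        8 * (1 + M) * (c₀ * |t| * lam ^ γ) ^ (-(1/2) : ℝ) := by
    intro t x ht
    have hK := kernel_bound ha hA₀ hpq hconv hφ hsupp ht x
    have ht0 : 0 < |t| := abs_pos.mpr ht
    have hX : 0 < c₀ * |t| * lam ^ γ := by positivity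
    have hXeq : |t| * (c₀ * lam ^ γ) = c₀ * |t| * lam ^ γ := by ring
    have hrpow : 8 / Real.sqrt (|t| * (c₀ * lam ^ γ)) =
        8 * (c₀ * |t| * lam ^ γ) ^ (-(1/2) : ℝ) := by
      rw [hXeq, Real.sqrt_eq_rpow, Real.rpow_neg hX.le, div_eq_mul_inv]
    calc ‖∫ ξ : ℝ, Complex.exp (Complex.I * ((x : ℂ) * (ξ : ℂ) - (t : ℂ) * (a ξ : ℂ))) * φ ξ‖
        ≤ (8 / Real.sqrt (|t| * (c₀ * lam ^ γ))) * ∫ ξ : ℝ, ‖deriv φ ξ‖ := hK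
      _ ≤ (8 / Real.sqrt (|t| * (c₀ * lam ^ γ))) * (1 + M) := by
          apply mul_le_mul_of_nonneg_left (by linarith) (by positivity)
      _ = 8 * (1 + M) * (c₀ * |t| * lam ^ γ) ^ (-(1/2) : ℝ) := by rw [hrpow]; ring
  refine ⟨part1, ?_⟩
  -- part 2
  intro f hf t x ht
  have ht0 : 0 < |t| := abs_pos.mpr ht
  have hcφ : Continuous φ := hφ.continuous
  have hcsφ : HasCompactSupport φ := by
    apply HasCompactSupport.intro (isCompact_Icc (a := p) (b := q))
    intro ξ hξ
    by_contra h0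
    exact hξ (hsupp h0)
  have hφint : Integrable φ := hcφ.integrable_of_hasCompactSupport hcsφ
  have hca : Continuous a := ha.continuous
  set B := 8 * (1 + M) * (c₀ * |t| * lam ^ γ) ^ (-(1/2) : ℝ) with hB_def
  have hB0 : 0 ≤ B := by positivity
  set G : ℝ → ℝ → ℂ := fun ξ y =>
    Complex.exp (Complex.I * ((x : ℂ) * (ξ : ℂ) - (t : ℂ) * (a ξ : ℂ))) * φ ξ *
      (Complex.exp (-(Complex.I * (y : ℂ) * (ξ : ℂ))) * f y) with hG_def
  have hGnorm : ∀ ξ y : ℝ, ‖G ξ y‖ = ‖φ ξ‖ * ‖f y‖ := by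
    intro ξ y
    rw [hG_def]
    simp only [norm_mul, Complex.norm_exp]
    have h1 : (Complex.I * ((x : ℂ) * (ξ : ℂ) - (t : ℂ) * (a ξ : ℂ))).re = 0 := by simp
    have h2 : (-(Complex.I * (y : ℂ) * (ξ : ℂ))).re = 0 := by simp
    rw [h1, h2, Real.exp_zero]
    ring
  have hGint : Integrable (Function.uncurry G) ((volume : Measure ℝ).prod volume) := by
    have hbase : Integrable (fun z : ℝ × ℝ => φ z.1 * f z.2)
        ((volume : Measure ℝ).prod volume) := hφint.mul_prod hf
    have hmeas : AEStronglyMeasurable (fun z : ℝ × ℝ =>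
        Complex.exp (Complex.I * ((x : ℂ) * (z.1 : ℂ) - (t : ℂ) * (a z.1 : ℂ))) *
        Complex.exp (-(Complex.I * (z.2 : ℂ) * (z.1 : ℂ))))
        ((volume : Measure ℝ).prod volume) := by
      apply Continuous.aestronglyMeasurable
      fun_prop
    have := hbase.bdd_mul (c := 1) hmeas (Filter.Eventually.of_forall ?_)
    · apply this.congr
      filter_upwards with z
      rw [Function.uncurry, hG_def]
      ring
    · intro z
      simp only [norm_mul, Complex.norm_exp]
      have h1 : (Complex.I * ((x : ℂ) * (z.1 : ℂ) - (t : ℂ) * (a z.1 : ℂ))).re = 0 := by simp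
      have h2 : (-(Complex.I * (z.2 : ℂ) * (z.1 : ℂ))).re = 0 := by simp
      rw [h1, h2, Real.exp_zero, mul_one]
  have hinner : ∀ ξ : ℝ,
      Complex.exp (Complex.I * ((x : ℂ) * (ξ : ℂ) - (t : ℂ) * (a ξ : ℂ))) * φ ξ * FT f ξ =
        ∫ y : ℝ, G ξ y := by
    intro ξ
    rw [hG_def, FT]
    exact (integral_const_mul _ _).symm
  have hswap : (∫ ξ : ℝ, Complex.exp (Complex.I * ((x : ℂ) * (ξ : ℂ) - (t : ℂ) * (a ξ : ℂ))) *
      φ ξ * FT f ξ) = ∫ y : ℝ, ∫ ξ : ℝ, G ξ y := by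
    rw [show (fun ξ : ℝ => Complex.exp (Complex.I * ((x : ℂ) * (ξ : ℂ) - (t : ℂ) * (a ξ : ℂ))) *
      φ ξ * FT f ξ) = fun ξ : ℝ => ∫ y : ℝ, G ξ y from funext hinner]
    exact integral_integral_swap hGint
  have hinner2 : ∀ y : ℝ, (∫ ξ : ℝ, G ξ y) =
      (∫ ξ : ℝ, Complex.exp (Complex.I * (((x - y : ℝ) : ℂ) * (ξ : ℂ) -
        (t : ℂ) * (a ξ : ℂ))) * φ ξ) * f y := by
    intro y
    rw [← integral_mul_const]
    congr 1
    funext ξ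
    rw [hG_def]
    simp only
    have hexp : Complex.exp (Complex.I * ((x : ℂ) * (ξ : ℂ) - (t : ℂ) * (a ξ : ℂ))) *
        Complex.exp (-(Complex.I * (y : ℂ) * (ξ : ℂ))) =
        Complex.exp (Complex.I * (((x - y : ℝ) : ℂ) * (ξ : ℂ) - (t : ℂ) * (a ξ : ℂ))) := by
      rw [← Complex.exp_add]
      congr 1
      push_cast
      ring
    rw [← hexp]
    ring
  have hbound : ‖∫ ξ : ℝ, Complex.exp (Complex.I * ((x : ℂ) * (ξ : ℂ) - (t : ℂ) * (a ξ : ℂ))) *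
      φ ξ * FT f ξ‖ ≤ B * ∫ x' : ℝ, ‖f x'‖ := by
    rw [hswap]
    calc ‖∫ y : ℝ, ∫ ξ : ℝ, G ξ y‖ ≤ ∫ y : ℝ, ‖∫ ξ : ℝ, G ξ y‖ :=
          norm_integral_le_integral_norm _
      _ ≤ ∫ y : ℝ, B * ‖f y‖ := by
          apply integral_mono_of_nonneg
          · filter_upwards with y using norm_nonneg _
          · exact hf.norm.const_mul B
          · filter_upwards with y
            rw [hinner2 y, norm_mul]
            exact mul_le_mul_of_nonneg_right (part1 t (x - y) ht) (norm_nonneg _)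
      _ = B * ∫ x' : ℝ, ‖f x'‖ := integral_const_mul B _
  -- assemble
  have hnorm2pi : ‖((2 * Real.pi : ℝ) : ℂ)⁻¹‖ ≤ 1 := by
    rw [norm_inv, Complex.norm_real, Real.norm_eq_abs,
      abs_of_pos (by positivity : (0:ℝ) < 2 * Real.pi)]
    rw [inv_le_one_iff₀]
    right
    linarith [Real.pi_gt_three]
  have hrpow_split : (c₀ * |t| * lam ^ γ) ^ (-(1/2) : ℝ) =
      c₀ ^ (-(1/2) : ℝ) * lam ^ (-γ / 2) * |t| ^ (-(1/2) : ℝ) := by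
    have hl : (0:ℝ) < lam := by linarith
    have h3 : (lam ^ γ) ^ (-(1/2) : ℝ) = lam ^ (-γ / 2) := by
      rw [← Real.rpow_mul hl.le]
      congr 1
      ring
    rw [Real.mul_rpow (by positivity) (Real.rpow_pos_of_pos hl γ).le,
      Real.mul_rpow hc₀.le ht0.le, h3]
    ring
  calc ‖((2 * Real.pi : ℝ) : ℂ)⁻¹ * ∫ ξ : ℝ,
        Complex.exp (Complex.I * ((x : ℂ) * (ξ : ℂ) - (t : ℂ) * (a ξ : ℂ))) * φ ξ * FT f ξ‖
      = ‖((2 * Real.pi : ℝ) : ℂ)⁻¹‖ * ‖∫ ξ : ℝ,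
        Complex.exp (Complex.I * ((x : ℂ) * (ξ : ℂ) - (t : ℂ) * (a ξ : ℂ))) * φ ξ * FT f ξ‖ :=
        norm_mul _ _
    _ ≤ 1 * (B * ∫ x' : ℝ, ‖f x'‖) := by
        apply mul_le_mul hnorm2pi hbound (norm_nonneg _) (by norm_num)
    _ = 8 * (1 + M) * c₀ ^ (-(1/2) : ℝ) * lam ^ (-γ / 2) * |t| ^ (-(1/2) : ℝ) *
        ∫ x' : ℝ, ‖f x'‖ := by
        rw [one_mul, hB_def, hrpow_split]
        ring
end

section
/- Let g : ℝ⁴ → ℂ be a smooth function of the variables (η₁, η₂, η₃, η₄), and suppose that g(η₁, η₂, 0, η₄) = 0 whenever η₁ = 0 or η₂ = 0 (i.e. g vanishes on the set {η₃ = 0 and η₁η₂ = 0}). Then there exist smooth functions b, r : ℝ⁴ → ℂ such that g(η) = b(η) · η₁η₂ + r(η) · η₃ for all η ∈ ℝ⁴. -/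
open MeasureTheory intervalIntegral Metric Set

attribute [local instance 101] secondCountableTopologyEither_of_left

lemma contDiff_param {E : Type} [NormedAddCommGroup E] [NormedSpace ℝ E] [ProperSpace E] :
    ∀ (n : ℕ) {F : Type} [NormedAddCommGroup F] [NormedSpace ℝ F] [CompleteSpace F]
      (G : E × ℝ → F), ContDiff ℝ (⊤ : ℕ∞) G →
      ContDiff ℝ (n : ℕ) (fun x : E => ∫ t in (0:ℝ)..1, G (x, t)) := by
  intro n
  induction n with
  | zero =>
    intro F _ _ _ G hG
    rw [show ((0:ℕ) : WithTop ℕ∞) = 0 by rfl, contDiff_zero]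
    exact continuous_parametric_intervalIntegral_of_continuous'
      (f := fun x t => G (x, t)) (by exact hG.continuous) 0 1
  | succ n ih =>
    intro F _ _ _ G hG
    set G' : E × ℝ → (E →L[ℝ] F) :=
      fun p => (fderiv ℝ G p).comp (ContinuousLinearMap.inl ℝ E ℝ) with hG'def
    have hG'cd : ContDiff ℝ (⊤ : ℕ∞) G' := by
      exact (hG.fderiv_right (m := (⊤:ℕ∞)) (le_of_eq rfl)).clm_comp contDiff_const
    have key : ∀ x₀ : E, HasFDerivAt (fun x => ∫ t in (0:ℝ)..1, G (x, t))
        (∫ t in (0:ℝ)..1, G' (x₀, t)) x₀ := by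
      intro x₀
      obtain ⟨C, hC⟩ := (isCompact_closedBall x₀ 1 |>.prod isCompact_Icc).exists_bound_of_continuousOn
        (hG'cd.continuous.continuousOn (s := closedBall x₀ 1 ×ˢ Icc (0:ℝ) 1))
      apply intervalIntegral.hasFDerivAt_integral_of_dominated_of_fderiv_le
        (F := fun x t => G (x, t)) (F' := fun x t => G' (x, t)) (bound := fun _ => C)
        (s := ball x₀ 1) (ball_mem_nhds x₀ one_pos)
      · exact Filter.Eventually.of_forall fun x =>
          (hG.continuous.comp (Continuous.prodMk_right x)).aestronglyMeasurable.restrict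
      · exact ((hG.continuous.comp (Continuous.prodMk_right x₀)).intervalIntegrable 0 1)
      · exact (hG'cd.continuous.comp (Continuous.prodMk_right x₀)).aestronglyMeasurable.restrict
      · refine Filter.Eventually.of_forall fun t ht x hx => hC (x, t) ?_
        rw [Set.uIoc_of_le (by norm_num : (0:ℝ) ≤ 1)] at ht
        exact ⟨ball_subset_closedBall hx, Set.Ioc_subset_Icc_self ht⟩
      · exact intervalIntegrable_const
      · refine Filter.Eventually.of_forall fun t ht x hx => ?_
        exact ((hG.differentiable (by simp) (x, t)).hasFDerivAt).comp x (hasFDerivAt_prodMk_left x t)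
    have hcast : ((n + 1 : ℕ) : WithTop ℕ∞) = (n : WithTop ℕ∞) + 1 := by push_cast; rfl
    rw [hcast, contDiff_succ_iff_fderiv]
    refine ⟨fun x => (key x).differentiableAt, by simp, ?_⟩
    have : (fderiv ℝ fun x => ∫ t in (0:ℝ)..1, G (x, t)) =
        fun x => ∫ t in (0:ℝ)..1, G' (x, t) := funext fun x => (key x).fderiv
    rw [this]
    exact ih G' hG'cd

lemma hadamard_coord (i : Fin 4) (f : (Fin 4 → ℝ) → ℂ) (hf : ContDiff ℝ (⊤ : ℕ∞) f)
    (hvan : ∀ η : Fin 4 → ℝ, η i = 0 → f η = 0) :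
    ∃ q : (Fin 4 → ℝ) → ℂ, ContDiff ℝ (⊤ : ℕ∞) q ∧
      (∀ η, f η = (η i : ℂ) * q η) ∧
      (∀ η, (∀ s : ℝ, f (Function.update η i s) = 0) → q η = 0) := by
  classical
  set v : Fin 4 → ℝ := Pi.single i 1 with hv
  have hupd : ∀ (η : Fin 4 → ℝ) (c : ℝ), Function.update η i c = η + (c - η i) • v := by
    intro η c; funext j
    by_cases h : j = i
    · subst h; simp [v]
    · simp [Function.update_of_ne h, v, Pi.single_eq_of_ne h]
  set φ : ((Fin 4 → ℝ) × ℝ) → (Fin 4 → ℝ) := fun p => p.1 + (p.2 * p.1 i - p.1 i) • v with hφdef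
  have hφeq : ∀ (η : Fin 4 → ℝ) (t : ℝ), φ (η, t) = Function.update η i (t * η i) := by
    intro η t; rw [hupd]
  have hi : ContDiff ℝ (⊤ : ℕ∞) (fun p : (Fin 4 → ℝ) × ℝ => p.1 i) :=
    (ContinuousLinearMap.proj (R := ℝ) (φ := fun _ : Fin 4 => ℝ) i).contDiff.comp contDiff_fst
  have hφ : ContDiff ℝ (⊤ : ℕ∞) φ :=
    contDiff_fst.add (((contDiff_snd.mul hi).sub hi).smul contDiff_const)
  set G : ((Fin 4 → ℝ) × ℝ) → ℂ := fun p => fderiv ℝ f (φ p) v with hGdef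
  have hGcd : ContDiff ℝ (⊤ : ℕ∞) G :=
    (((hf.fderiv_right (m := (⊤:ℕ∞)) (le_of_eq rfl)).comp hφ)).clm_apply contDiff_const
  refine ⟨fun η => ∫ t in (0:ℝ)..1, G (η, t), ?_, ?_, ?_⟩
  · exact contDiff_infty.mpr fun n => contDiff_param n G hGcd
  · intro η
    set c : ℝ := η i with hc
    have hpath : ∀ t : ℝ, HasDerivAt (fun s : ℝ => φ (η, s)) (c • v) t := by
      intro t
      exact (((hasDerivAt_mul_const c).sub_const c).smul_const v).const_add η
    have hψ : ∀ t ∈ Set.uIcc (0:ℝ) 1,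
        HasDerivAt (fun s : ℝ => f (φ (η, s))) (c • G (η, t)) t := by
      intro t _
      have := ((hf.differentiable (by simp)) (φ (η, t))).hasFDerivAt.comp_hasDerivAt
        t (hpath t)
      simpa [G, ContinuousLinearMap.map_smul, Function.comp_def] using this
    have hint : IntervalIntegrable (fun t => c • G (η, t)) MeasureTheory.volume 0 1 :=
      ((hGcd.continuous.comp (Continuous.prodMk_right η)).const_smul c).intervalIntegrable 0 1
    have hFTC := intervalIntegral.integral_eq_sub_of_hasDerivAt hψ hint
    have h1 : φ (η, 1) = η := by simp [φ]
    have h0 : f (φ (η, 0)) = 0 := by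
      apply hvan
      simp [φ, v]
    rw [h1, h0, sub_zero, intervalIntegral.integral_smul] at hFTC
    rw [← hFTC, Complex.real_smul]
  · intro η h0
    have hGz : ∀ t : ℝ, G (η, t) = 0 := by
      intro t
      set p : Fin 4 → ℝ := φ (η, t) with hp
      have hps : ∀ s : ℝ, f (Function.update p i s) = 0 := by
        intro s
        rw [hp, hφeq, Function.update_idem]
        exact h0 s
      have hupath : HasDerivAt (fun s : ℝ => Function.update p i s) v (p i) := by
        have : (fun s : ℝ => Function.update p i s) = fun s => p + (s - p i) • v := by
          funext s; exact hupd p s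
        rw [this]
        simpa using (((hasDerivAt_id (p i)).sub_const (p i)).smul_const v).const_add p
      have hd : HasDerivAt (fun s : ℝ => f (Function.update p i s)) (fderiv ℝ f p v) (p i) := by
        have := ((hf.differentiable (by simp))
            (Function.update p i (p i))).hasFDerivAt.comp_hasDerivAt (p i) hupath
        simpa [Function.update_eq_self, Function.comp_def] using this
      have hconst : (fun s : ℝ => f (Function.update p i s)) = fun _ => (0:ℂ) :=
        funext hps
      rw [hconst] at hd
      exact hd.unique (hasDerivAt_const _ _)
    simp only [hGz]
    simp

/-- Smooth division lemma in the diagonalizing coordinates: a smooth function `g(η₁,η₂,η₃,η₄)`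
vanishing on the resonant set `{η₃ = 0 and η₁η₂ = 0}` can be written as
`g = b·η₁η₂ + r·η₃` with smooth coefficients `b, r`. -/
theorem stmt_17 (g : (Fin 4 → ℝ) → ℂ) (hg : ContDiff ℝ (⊤ : ℕ∞) g)
    (hvan : ∀ η : Fin 4 → ℝ, η 2 = 0 → (η 0 = 0 ∨ η 1 = 0) → g η = 0) :
    ∃ b r : (Fin 4 → ℝ) → ℂ,
      ContDiff ℝ (⊤ : ℕ∞) b ∧ ContDiff ℝ (⊤ : ℕ∞) r ∧
      ∀ η : Fin 4 → ℝ, g η = b η * ((η 0 * η 1 : ℝ) : ℂ) + r η * ((η 2 : ℝ) : ℂ) := by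
  classical
  set S : (Fin 4 → ℝ) → (Fin 4 → ℝ) := fun η => Function.update η 2 0 with hS
  have hSsm : ContDiff ℝ (⊤ : ℕ∞) S := by
    have hEq : S = fun η => η + (0 - η 2) • (Pi.single 2 1 : Fin 4 → ℝ) := by
      funext η j
      by_cases h : j = 2
      · subst h; simp [S]
      · simp [S, Function.update_of_ne h, Pi.single_eq_of_ne h]
    rw [hEq]
    exact contDiff_id.add ((contDiff_const.sub
      (ContinuousLinearMap.proj (R := ℝ) (φ := fun _ : Fin 4 => ℝ) 2).contDiff).smul contDiff_const)
  have hS2 : ∀ η, S η 2 = 0 := fun η => Function.update_self _ _ _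
  have hS0 : ∀ η, S η 0 = η 0 := fun η => Function.update_of_ne (by decide) _ _
  have hS1 : ∀ η, S η 1 = η 1 := fun η => Function.update_of_ne (by decide) _ _
  have hdcd : ContDiff ℝ (⊤ : ℕ∞) (fun η => g η - g (S η)) := hg.sub (hg.comp hSsm)
  have hdv : ∀ η : Fin 4 → ℝ, η 2 = 0 → g η - g (S η) = 0 := by
    intro η h
    have : S η = η := by rw [hS]; rw [← h]; exact Function.update_eq_self _ _
    rw [this, sub_self]
  obtain ⟨r, hrsm, hrid, -⟩ := hadamard_coord 2 (fun η => g η - g (S η)) hdcd hdv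
  have hg0v : ∀ η : Fin 4 → ℝ, η 0 = 0 → g (S η) = 0 := fun η h =>
    hvan (S η) (hS2 η) (Or.inl (by rw [hS0, h]))
  obtain ⟨q₁, hq₁sm, hq₁id, hq₁z⟩ := hadamard_coord 0 (fun η => g (S η)) (hg.comp hSsm) hg0v
  have hq₁v : ∀ η : Fin 4 → ℝ, η 1 = 0 → q₁ η = 0 := by
    intro η h
    apply hq₁z
    intro s
    apply hvan _ (hS2 _)
    right
    rw [hS1, Function.update_of_ne (by decide), h]
  obtain ⟨b, hbsm, hbid, -⟩ := hadamard_coord 1 q₁ hq₁sm hq₁v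
  refine ⟨b, r, hbsm, hrsm, fun η => ?_⟩
  have h1 := hrid η
  have h2 := hq₁id η
  have h3 := hbid η
  push_cast
  linear_combination h1 + h2 + ((η 0 : ℂ)) * h3
end

section
/- Let a : ℝ → ℝ be smooth and let f be a Schwartz function on ℝ whose Fourier transform f̂ has compact support. Define the free evolution u(t,x) := (2π)^{-1} ∫ e^{i(xξ - t a(ξ))} f̂(ξ) dξ, the momentum symbol p(ξ,η) := -(a(ξ)-a(η))/(ξ-η) for ξ ≠ η extended by p(ξ,ξ) := -a'(ξ), the momentum density P(t,x) := (2π)^{-2} ∬ e^{ix(ξ-η)} e^{-it(a(ξ)-a(η))} p(ξ,η) f̂(ξ) conj(f̂(η)) dξ dη, and the energy density E(t,x) := (2π)^{-2} ∬ e^{ix(ξ-η)} e^{-it(a(ξ)-a(η))} p(ξ,η)² f̂(ξ) conj(f̂(η)) dξ dη. Then P and E are real-valued, and for all (t,x) ∈ ℝ × ℝ the density–flux identities hold: ∂_t |u(t,x)|² = ∂_x P(t,x) and ∂_t P(t,x) = ∂_x E(t,x). -/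
open MeasureTheory Set

/-- The momentum symbol `p(ξ,η) = -(a(ξ)-a(η))/(ξ-η)`, extended by `-a'(ξ)` on the diagonal. -/
noncomputable def psym (a : ℝ → ℝ) (ξ η : ℝ) : ℝ :=
  if ξ = η then -deriv a ξ else -((a ξ - a η) / (ξ - η))

/-- The free dispersive evolution `u(t,x) = (2π)⁻¹ ∫ e^{i(xξ - t a(ξ))} F(ξ) dξ`. -/
noncomputable def uEvol (a : ℝ → ℝ) (F : ℝ → ℂ) (t x : ℝ) : ℂ :=
  ((2 * Real.pi : ℝ) : ℂ)⁻¹ *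
    ∫ ξ : ℝ, Complex.exp (Complex.I * ((x : ℂ) * (ξ : ℂ) - (t : ℂ) * (a ξ : ℂ))) * F ξ

/-- The momentum density
`P(t,x) = (2π)^{-2} ∬ e^{ix(ξ-η)} e^{-it(a(ξ)-a(η))} p(ξ,η) f̂(ξ) conj(f̂(η)) dξ dη`. -/
noncomputable def Pdens (a : ℝ → ℝ) (F : ℝ → ℂ) (t x : ℝ) : ℂ :=
  (((2 * Real.pi) ^ 2 : ℝ) : ℂ)⁻¹ *
    ∫ ξ : ℝ, ∫ η : ℝ,
      Complex.exp (Complex.I * (x : ℂ) * ((ξ : ℂ) - (η : ℂ))) *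
        Complex.exp (-(Complex.I * (t : ℂ) * ((a ξ : ℝ) - (a η : ℝ) : ℝ))) *
        (psym a ξ η : ℂ) * F ξ * (starRingEnd ℂ) (F η)

/-- The energy density, with symbol `p(ξ,η)²`. -/
noncomputable def Edens (a : ℝ → ℝ) (F : ℝ → ℂ) (t x : ℝ) : ℂ :=
  (((2 * Real.pi) ^ 2 : ℝ) : ℂ)⁻¹ *
    ∫ ξ : ℝ, ∫ η : ℝ,
      Complex.exp (Complex.I * (x : ℂ) * ((ξ : ℂ) - (η : ℂ))) *
        Complex.exp (-(Complex.I * (t : ℂ) * ((a ξ : ℝ) - (a η : ℝ) : ℝ))) *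
        ((psym a ξ η) ^ 2 : ℝ) * F ξ * (starRingEnd ℂ) (F η)

open MeasureTheory Set Complex

namespace S19

noncomputable def phase (a : ℝ → ℝ) (t x : ℝ) (q : ℝ × ℝ) : ℝ :=
  x * (q.1 - q.2) - t * (a q.1 - a q.2)

noncomputable def Ker (a : ℝ → ℝ) (F : ℝ → ℂ) (c : ℝ → ℝ → ℝ) (t x : ℝ) (q : ℝ × ℝ) : ℂ :=
  Complex.exp ((phase a t x q : ℂ) * Complex.I) * ((c q.1 q.2 : ℝ) : ℂ) * F q.1 *
    (starRingEnd ℂ) (F q.2)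

lemma norm_Ker (a : ℝ → ℝ) (F : ℝ → ℂ) (c : ℝ → ℝ → ℝ) (t x : ℝ) (q : ℝ × ℝ) :
    ‖Ker a F c t x q‖ = |c q.1 q.2| * (‖F q.1‖ * ‖F q.2‖) := by
  simp [Ker, Complex.norm_exp, mul_assoc]

lemma psym_symm (a : ℝ → ℝ) (ξ η : ℝ) : psym a ξ η = psym a η ξ := by
  by_cases h : ξ = η
  · subst h; rfl
  · rw [psym, psym, if_neg h, if_neg (Ne.symm h), ← neg_sub (a ξ) (a η), ← neg_sub ξ η,
      neg_div_neg_eq]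

lemma psym_mul (a : ℝ → ℝ) (ξ η : ℝ) : (ξ - η) * psym a ξ η = -(a ξ - a η) := by
  by_cases h : ξ = η
  · subst h; simp
  · rw [psym, if_neg h]
    field_simp [sub_ne_zero.mpr h]

end S19
namespace S19

/-- A "good symbol": measurable and bounded on the support square. -/
def Sym (F : ℝ → ℂ) (c : ℝ → ℝ → ℝ) : Prop :=
  Measurable (fun q : ℝ × ℝ => c q.1 q.2) ∧
    ∃ M, ∀ q : ℝ × ℝ, q.1 ∈ tsupport F → q.2 ∈ tsupport F → |c q.1 q.2| ≤ M

lemma Sym.mul {F : ℝ → ℂ} {c c' : ℝ → ℝ → ℝ} (h : Sym F c) (h' : Sym F c') :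
    Sym F (fun ξ η => c ξ η * c' ξ η) := by
  obtain ⟨hm, M, hM⟩ := h
  obtain ⟨hm', M', hM'⟩ := h'
  refine ⟨hm.mul hm', M * M', fun q h1 h2 => ?_⟩
  rw [abs_mul]
  exact mul_le_mul (hM q h1 h2) (hM' q h1 h2) (abs_nonneg _)
    ((abs_nonneg _).trans (hM q h1 h2))

lemma Sym.of_continuous {F : ℝ → ℂ} (hFs : HasCompactSupport F) {c : ℝ → ℝ → ℝ}
    (hc : Continuous fun q : ℝ × ℝ => c q.1 q.2) : Sym F c := by
  obtain ⟨M, hM⟩ := (hFs.prod hFs).exists_bound_of_continuousOn hc.continuousOn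
  exact ⟨hc.measurable, M, fun q h1 h2 => by
    simpa using hM q ⟨h1, h2⟩⟩

lemma Sym.one {F : ℝ → ℂ} (hFs : HasCompactSupport F) : Sym F (fun _ _ => 1) :=
  Sym.of_continuous hFs continuous_const

lemma Sym.asub {F : ℝ → ℂ} (hFs : HasCompactSupport F) {a : ℝ → ℝ} (hac : Continuous a) :
    Sym F (fun ξ η => a ξ - a η) :=
  Sym.of_continuous hFs ((hac.comp continuous_fst).sub (hac.comp continuous_snd))

lemma Sym.idsub {F : ℝ → ℂ} (hFs : HasCompactSupport F) :
    Sym F (fun ξ η : ℝ => ξ - η) :=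
  Sym.of_continuous hFs (continuous_fst.sub continuous_snd)

lemma Sym.psym' {F : ℝ → ℂ} (hFs : HasCompactSupport F) {a : ℝ → ℝ}
    (ha : ContDiff ℝ (⊤ : ℕ∞) a) : Sym F (psym a) := by
  have h1le : (1 : WithTop ℕ∞) ≤ ((⊤ : ℕ∞) : WithTop ℕ∞) := by exact_mod_cast le_top
  have hacd : Continuous (deriv a) := ha.continuous_deriv h1le
  constructor
  · unfold psym
    exact Measurable.ite (measurableSet_eq_fun measurable_fst measurable_snd)
      ((hacd.measurable.comp measurable_fst).neg)
      ((((ha.continuous.measurable.comp measurable_fst).sub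
        (ha.continuous.measurable.comp measurable_snd)).div
        (measurable_fst.sub measurable_snd)).neg)
  · obtain ⟨R, hR⟩ : ∃ R, tsupport F ⊆ Icc (-R) R := by
      obtain ⟨r, hr⟩ := hFs.isBounded.subset_closedBall 0
      exact ⟨r, by rwa [Real.closedBall_eq_Icc, zero_sub, zero_add] at hr⟩
    obtain ⟨M, hM⟩ := (isCompact_Icc (a := -R) (b := R)).exists_bound_of_continuousOn
      hacd.continuousOn
    have key : ∀ ξ η : ℝ, ξ ∈ Icc (-R) R → η ∈ Icc (-R) R → ξ < η → |psym a ξ η| ≤ M := by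
      intro ξ η hξ hη hlt
      obtain ⟨c, hc, hc2⟩ := exists_hasDerivAt_eq_slope a (deriv a) hlt
        (ha.continuous.continuousOn)
        (fun y _ => ((ha.differentiable (by simp)) y).hasDerivAt)
      have hps : psym a ξ η = -deriv a c := by
        rw [psym, if_neg hlt.ne, hc2, ← neg_sub (a η) (a ξ), ← neg_sub η ξ, neg_div_neg_eq]
      rw [hps, abs_neg]
      exact hM c ⟨by linarith [hξ.1, hc.1.le], by linarith [hη.2, hc.2.le]⟩
    refine ⟨M, fun q h1 h2 => ?_⟩
    have h1' := hR h1; have h2' := hR h2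
    rcases lt_trichotomy q.1 q.2 with h | h | h
    · exact key _ _ h1' h2' h
    · rw [show psym a q.1 q.2 = -deriv a q.1 by rw [psym, if_pos h], abs_neg]
      exact hM q.1 h1'
    · rw [psym_symm]; exact key _ _ h2' h1' h

end S19
namespace S19

lemma Ker_bound {F : ℝ → ℂ} {c : ℝ → ℝ → ℝ} {M : ℝ}
    (hM : ∀ q : ℝ × ℝ, q.1 ∈ tsupport F → q.2 ∈ tsupport F → |c q.1 q.2| ≤ M)
    (a : ℝ → ℝ) (t x : ℝ) (q : ℝ × ℝ) :
    ‖Ker a F c t x q‖ ≤ M * (‖F q.1‖ * ‖F q.2‖) := by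
  rw [norm_Ker]
  by_cases h1 : q.1 ∈ tsupport F
  · by_cases h2 : q.2 ∈ tsupport F
    · exact mul_le_mul_of_nonneg_right (hM q h1 h2) (by positivity)
    · simp [image_eq_zero_of_notMem_tsupport h2]
  · simp [image_eq_zero_of_notMem_tsupport h1]

lemma bound_int {F : ℝ → ℂ} (hFc : Continuous F) (hFs : HasCompactSupport F) (M : ℝ) :
    Integrable (fun q : ℝ × ℝ => M * (‖F q.1‖ * ‖F q.2‖)) := by
  have h : Integrable (fun x : ℝ => ‖F x‖) :=
    (hFc.norm).integrable_of_hasCompactSupport hFs.norm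
  exact (h.mul_prod h).const_mul M

lemma Ker_meas {a : ℝ → ℝ} (hac : Continuous a) {F : ℝ → ℂ} (hFc : Continuous F)
    {c : ℝ → ℝ → ℝ} (hc : Measurable fun q : ℝ × ℝ => c q.1 q.2) (t x : ℝ) :
    AEStronglyMeasurable (Ker a F c t x) volume := by
  have hph : Continuous (phase a t x) := by
    unfold phase
    exact (continuous_const.mul (continuous_fst.sub continuous_snd)).sub
      (continuous_const.mul ((hac.comp continuous_fst).sub (hac.comp continuous_snd)))
  refine Measurable.aestronglyMeasurable ?_
  exact ((((Complex.continuous_exp.measurable.comp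
      ((Complex.measurable_ofReal.comp hph.measurable).mul_const Complex.I)).mul
      (Complex.measurable_ofReal.comp hc)).mul
      (hFc.measurable.comp measurable_fst)).mul
      ((Complex.continuous_conj.measurable.comp (hFc.measurable.comp measurable_snd))))

lemma Ker_int {a : ℝ → ℝ} (hac : Continuous a) {F : ℝ → ℂ} (hFc : Continuous F)
    (hFs : HasCompactSupport F) {c : ℝ → ℝ → ℝ} (hc : Sym F c) (t x : ℝ) :
    Integrable (Ker a F c t x) := by
  obtain ⟨hm, M, hM⟩ := hc
  exact (bound_int hFc hFs M).mono' (Ker_meas hac hFc hm t x)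
    (Filter.Eventually.of_forall (Ker_bound hM a t x))

lemma hasDerivAt_Ker_t (a : ℝ → ℝ) (F : ℝ → ℂ) (c : ℝ → ℝ → ℝ) (t x : ℝ) (q : ℝ × ℝ) :
    HasDerivAt (fun s => Ker a F c s x q)
      (-Complex.I * Ker a F (fun ξ η => (a ξ - a η) * c ξ η) t x q) t := by
  have h1 : HasDerivAt (fun s : ℝ => phase a s x q) (-(a q.1 - a q.2)) t := by
    unfold phase
    simpa using (((hasDerivAt_id t).mul_const (a q.1 - a q.2)).const_sub
      (x * (q.1 - q.2)))
  have h2 := (((h1.ofReal_comp.mul_const Complex.I).cexp.mul_const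
    ((c q.1 q.2 : ℝ) : ℂ)).mul_const (F q.1)).mul_const ((starRingEnd ℂ) (F q.2))
  refine h2.congr_deriv ?_
  unfold Ker
  push_cast
  ring

lemma hasDerivAt_Ker_x (a : ℝ → ℝ) (F : ℝ → ℂ) (c : ℝ → ℝ → ℝ) (t x : ℝ) (q : ℝ × ℝ) :
    HasDerivAt (fun y => Ker a F c t y q)
      (Complex.I * Ker a F (fun ξ η => (ξ - η) * c ξ η) t x q) x := by
  have h1 : HasDerivAt (fun y : ℝ => phase a t y q) (q.1 - q.2) x := by
    unfold phase
    simpa using ((hasDerivAt_id x).mul_const (q.1 - q.2)).sub_const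
      (t * (a q.1 - a q.2))
  have h2 := (((h1.ofReal_comp.mul_const Complex.I).cexp.mul_const
    ((c q.1 q.2 : ℝ) : ℂ)).mul_const (F q.1)).mul_const ((starRingEnd ℂ) (F q.2))
  refine h2.congr_deriv ?_
  unfold Ker
  push_cast
  ring

end S19
namespace S19

lemma hasDerivAt_int_t {a : ℝ → ℝ} (ha : ContDiff ℝ (⊤ : ℕ∞) a) {F : ℝ → ℂ}
    (hFc : Continuous F) (hFs : HasCompactSupport F) {c : ℝ → ℝ → ℝ} (hc : Sym F c)
    (t x : ℝ) :
    HasDerivAt (fun s => ∫ q : ℝ × ℝ, Ker a F c s x q)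
      (∫ q : ℝ × ℝ, -Complex.I * Ker a F (fun ξ η => (a ξ - a η) * c ξ η) t x q) t := by
  have hc' : Sym F (fun ξ η => (a ξ - a η) * c ξ η) := (Sym.asub hFs ha.continuous).mul hc
  obtain ⟨hm', M', hM'⟩ := hc'
  refine (hasDerivAt_integral_of_dominated_loc_of_deriv_le (s := Metric.ball t 1) (Metric.ball_mem_nhds t one_pos)
    (Filter.Eventually.of_forall fun s => Ker_meas ha.continuous hFc hc.1 s x)
    (Ker_int ha.continuous hFc hFs hc t x)
    (F' := fun s q => -Complex.I * Ker a F (fun ξ η => (a ξ - a η) * c ξ η) s x q)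
    (((Ker_meas ha.continuous hFc hm' t x).const_mul (-Complex.I)))
    (bound := fun q => M' * (‖F q.1‖ * ‖F q.2‖)) ?_ (bound_int hFc hFs M') ?_).2
  · refine Filter.Eventually.of_forall fun q s _ => ?_
    rw [norm_mul]
    simpa using Ker_bound hM' a s x q
  · exact Filter.Eventually.of_forall fun q s _ => hasDerivAt_Ker_t a F c s x q

lemma hasDerivAt_int_x {a : ℝ → ℝ} (ha : ContDiff ℝ (⊤ : ℕ∞) a) {F : ℝ → ℂ}
    (hFc : Continuous F) (hFs : HasCompactSupport F) {c : ℝ → ℝ → ℝ} (hc : Sym F c)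
    (t x : ℝ) :
    HasDerivAt (fun y => ∫ q : ℝ × ℝ, Ker a F c t y q)
      (∫ q : ℝ × ℝ, Complex.I * Ker a F (fun ξ η => (ξ - η) * c ξ η) t x q) x := by
  have hc' : Sym F (fun ξ η : ℝ => (ξ - η) * c ξ η) := (Sym.idsub hFs).mul hc
  obtain ⟨hm', M', hM'⟩ := hc'
  refine (hasDerivAt_integral_of_dominated_loc_of_deriv_le (s := Metric.ball x 1) (Metric.ball_mem_nhds x one_pos)
    (Filter.Eventually.of_forall fun y => Ker_meas ha.continuous hFc hc.1 t y)
    (Ker_int ha.continuous hFc hFs hc t x)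
    (F' := fun y q => Complex.I * Ker a F (fun ξ η => (ξ - η) * c ξ η) t y q)
    (((Ker_meas ha.continuous hFc hm' t x).const_mul Complex.I))
    (bound := fun q => M' * (‖F q.1‖ * ‖F q.2‖)) ?_ (bound_int hFc hFs M') ?_).2
  · refine Filter.Eventually.of_forall fun q y _ => ?_
    rw [norm_mul]
    simpa using Ker_bound hM' a t y q
  · exact Filter.Eventually.of_forall fun q y _ => hasDerivAt_Ker_x a F c t y q

/-- the key pointwise flux identity -/
lemma Ker_flux (a : ℝ → ℝ) (F : ℝ → ℂ) (c : ℝ → ℝ → ℝ) (t x : ℝ) (q : ℝ × ℝ) :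
    -Complex.I * Ker a F (fun ξ η => (a ξ - a η) * c ξ η) t x q =
      Complex.I * Ker a F (fun ξ η => (ξ - η) * (psym a ξ η * c ξ η)) t x q := by
  have h : ((q.1 - q.2) * (psym a q.1 q.2 * c q.1 q.2) : ℝ) =
      -((a q.1 - a q.2) * c q.1 q.2) := by
    rw [← mul_assoc, psym_mul]; ring
  unfold Ker
  rw [show (((q.1 - q.2) * (psym a q.1 q.2 * c q.1 q.2) : ℝ) : ℂ) =
      ((-((a q.1 - a q.2) * c q.1 q.2) : ℝ) : ℂ) from by rw [h]]
  push_cast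
  ring

end S19
namespace S19

lemma iterated (a : ℝ → ℝ) (F : ℝ → ℂ) (c : ℝ → ℝ → ℝ) (t x : ℝ)
    (hint : Integrable (Ker a F c t x)) :
    (∫ ξ : ℝ, ∫ η : ℝ, Ker a F c t x (ξ, η)) = ∫ q : ℝ × ℝ, Ker a F c t x q := by
  have hu : Function.uncurry (fun ξ η => Ker a F c t x (ξ, η)) = Ker a F c t x := by
    funext q; simp [Function.uncurry]
  rw [MeasureTheory.integral_integral (f := fun ξ η => Ker a F c t x (ξ, η))
    (by rw [hu]; exact hint)]
  rfl

lemma Pdens_pt (a : ℝ → ℝ) (F : ℝ → ℂ) (t x ξ η : ℝ) :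
    Complex.exp (Complex.I * (x : ℂ) * ((ξ : ℂ) - (η : ℂ))) *
        Complex.exp (-(Complex.I * (t : ℂ) * ((a ξ : ℝ) - (a η : ℝ) : ℝ))) *
        (psym a ξ η : ℂ) * F ξ * (starRingEnd ℂ) (F η) =
      Ker a F (psym a) t x (ξ, η) := by
  unfold Ker phase
  rw [show Complex.exp (Complex.I * (x : ℂ) * ((ξ : ℂ) - (η : ℂ))) *
        Complex.exp (-(Complex.I * (t : ℂ) * ((a ξ : ℝ) - (a η : ℝ) : ℝ))) =
      Complex.exp (Complex.I * (x : ℂ) * ((ξ : ℂ) - (η : ℂ)) +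
        -(Complex.I * (t : ℂ) * ((a ξ : ℝ) - (a η : ℝ) : ℝ))) from
    (Complex.exp_add _ _).symm]
  congr 2
  push_cast
  ring

lemma Edens_pt (a : ℝ → ℝ) (F : ℝ → ℂ) (t x ξ η : ℝ) :
    Complex.exp (Complex.I * (x : ℂ) * ((ξ : ℂ) - (η : ℂ))) *
        Complex.exp (-(Complex.I * (t : ℂ) * ((a ξ : ℝ) - (a η : ℝ) : ℝ))) *
        ((psym a ξ η) ^ 2 : ℝ) * F ξ * (starRingEnd ℂ) (F η) =
      Ker a F (fun ξ η => psym a ξ η ^ 2) t x (ξ, η) := by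
  unfold Ker phase
  rw [show Complex.exp (Complex.I * (x : ℂ) * ((ξ : ℂ) - (η : ℂ))) *
        Complex.exp (-(Complex.I * (t : ℂ) * ((a ξ : ℝ) - (a η : ℝ) : ℝ))) =
      Complex.exp (Complex.I * (x : ℂ) * ((ξ : ℂ) - (η : ℂ)) +
        -(Complex.I * (t : ℂ) * ((a ξ : ℝ) - (a η : ℝ) : ℝ))) from
    (Complex.exp_add _ _).symm]
  congr 2
  push_cast
  ring

lemma Pdens_eq (a : ℝ → ℝ) (F : ℝ → ℂ) (t x : ℝ)
    (hint : Integrable (Ker a F (psym a) t x)) :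
    Pdens a F t x =
      (((2 * Real.pi) ^ 2 : ℝ) : ℂ)⁻¹ * ∫ q : ℝ × ℝ, Ker a F (psym a) t x q := by
  unfold Pdens
  congr 1
  simp_rw [Pdens_pt a F t x]
  exact iterated a F (psym a) t x hint

lemma Edens_eq (a : ℝ → ℝ) (F : ℝ → ℂ) (t x : ℝ)
    (hint : Integrable (Ker a F (fun ξ η => psym a ξ η ^ 2) t x)) :
    Edens a F t x =
      (((2 * Real.pi) ^ 2 : ℝ) : ℂ)⁻¹ *
        ∫ q : ℝ × ℝ, Ker a F (fun ξ η => psym a ξ η ^ 2) t x q := by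
  unfold Edens
  congr 1
  simp_rw [Edens_pt a F t x]
  exact iterated a F _ t x hint

end S19
namespace S19

lemma mass_pt (a : ℝ → ℝ) (F : ℝ → ℂ) (t x ξ η : ℝ) :
    (Complex.exp (Complex.I * ((x : ℂ) * (ξ : ℂ) - (t : ℂ) * (a ξ : ℂ))) * F ξ) *
      (starRingEnd ℂ)
        (Complex.exp (Complex.I * ((x : ℂ) * (η : ℂ) - (t : ℂ) * (a η : ℂ))) * F η) =
      Ker a F (fun _ _ => 1) t x (ξ, η) := by
  rw [map_mul, ← Complex.exp_conj]
  rw [show (starRingEnd ℂ) (Complex.I * ((x : ℂ) * (η : ℂ) - (t : ℂ) * (a η : ℂ))) =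
      -(Complex.I * ((x : ℂ) * (η : ℂ) - (t : ℂ) * (a η : ℂ))) from by
    (first
      | (simp [map_mul, map_sub, Complex.conj_ofReal]; ring)
      | simp [map_mul, map_sub, Complex.conj_ofReal])]
  rw [mul_mul_mul_comm, ← Complex.exp_add]
  unfold Ker phase
  rw [show Complex.I * ((x : ℂ) * (ξ : ℂ) - (t : ℂ) * (a ξ : ℂ)) +
      -(Complex.I * ((x : ℂ) * (η : ℂ) - (t : ℂ) * (a η : ℂ))) =
      ((x * (((ξ, η) : ℝ × ℝ).1 - ((ξ, η) : ℝ × ℝ).2) -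
        t * (a ((ξ, η) : ℝ × ℝ).1 - a ((ξ, η) : ℝ × ℝ).2) : ℝ) : ℂ) * Complex.I from by
    push_cast; ring]
  push_cast
  ring

lemma mass_eq (a : ℝ → ℝ) (F : ℝ → ℂ) (t x : ℝ)
    (hint : Integrable (Ker a F (fun _ _ => 1) t x)) :
    ((‖uEvol a F t x‖ ^ 2 : ℝ) : ℂ) =
      (((2 * Real.pi) ^ 2 : ℝ) : ℂ)⁻¹ * ∫ q : ℝ × ℝ, Ker a F (fun _ _ => 1) t x q := by
  have h0 : ((‖uEvol a F t x‖ ^ 2 : ℝ) : ℂ) =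
      uEvol a F t x * (starRingEnd ℂ) (uEvol a F t x) := by
    rw [Complex.mul_conj']; push_cast; ring
  rw [h0]
  unfold uEvol
  rw [map_mul, map_inv₀, Complex.conj_ofReal, ← integral_conj]
  rw [show (((2 * Real.pi : ℝ) : ℂ)⁻¹ * ∫ ξ : ℝ,
        Complex.exp (Complex.I * ((x : ℂ) * (ξ : ℂ) - (t : ℂ) * (a ξ : ℂ))) * F ξ) *
      (((2 * Real.pi : ℝ) : ℂ)⁻¹ * ∫ η : ℝ, (starRingEnd ℂ)
        (Complex.exp (Complex.I * ((x : ℂ) * (η : ℂ) - (t : ℂ) * (a η : ℂ))) * F η)) =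
      (((2 * Real.pi) ^ 2 : ℝ) : ℂ)⁻¹ *
      ((∫ ξ : ℝ, Complex.exp (Complex.I * ((x : ℂ) * (ξ : ℂ) - (t : ℂ) * (a ξ : ℂ))) * F ξ) *
       (∫ η : ℝ, (starRingEnd ℂ)
        (Complex.exp (Complex.I * ((x : ℂ) * (η : ℂ) - (t : ℂ) * (a η : ℂ))) * F η))) from by
    push_cast; ring]
  congr 1
  rw [← integral_mul_const]
  simp_rw [← integral_const_mul, mass_pt a F t x]
  exact iterated a F _ t x hint

lemma FT_cont (f : SchwartzMap ℝ ℂ) : Continuous (FT ⇑f) := by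
  apply MeasureTheory.continuous_of_dominated (bound := fun x => ‖f x‖)
  · intro ξ
    exact ((Complex.continuous_exp.comp
      (((continuous_const.mul Complex.continuous_ofReal).mul continuous_const).neg)).mul
      f.continuous).aestronglyMeasurable
  · intro ξ
    refine Filter.Eventually.of_forall fun x => ?_
    simp [norm_mul, Complex.norm_exp]
  · exact f.integrable.norm
  · refine Filter.Eventually.of_forall fun x => ?_
    exact (Complex.continuous_exp.comp
      (((continuous_const.mul Complex.continuous_ofReal).neg))).mul continuous_const

lemma Ker_conj (a : ℝ → ℝ) (F : ℝ → ℂ) (c : ℝ → ℝ → ℝ)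
    (hsymm : ∀ ξ η, c ξ η = c η ξ) (t x : ℝ) (q : ℝ × ℝ) :
    (starRingEnd ℂ) (Ker a F c t x q) = Ker a F c t x q.swap := by
  unfold Ker
  rw [map_mul, map_mul, map_mul, ← Complex.exp_conj]
  rw [show (starRingEnd ℂ) ((phase a t x q : ℂ) * Complex.I) =
      ((phase a t x q.swap : ℝ) : ℂ) * Complex.I from by
    have : phase a t x q.swap = -phase a t x q := by unfold phase; simp; ring
    rw [this]
    (first
      | (push_cast; simp [Complex.conj_ofReal]; ring)
      | (push_cast; simp [Complex.conj_ofReal]))]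
  rw [Complex.conj_ofReal, Complex.conj_conj]
  simp only [Prod.fst_swap, Prod.snd_swap]
  rw [hsymm q.1 q.2]
  ring

lemma int_real (a : ℝ → ℝ) (F : ℝ → ℂ) (c : ℝ → ℝ → ℝ)
    (hsymm : ∀ ξ η, c ξ η = c η ξ) (t x : ℝ) :
    (starRingEnd ℂ) (∫ q : ℝ × ℝ, Ker a F c t x q) = ∫ q : ℝ × ℝ, Ker a F c t x q := by
  rw [← integral_conj]
  simp_rw [Ker_conj a F c hsymm t x]
  exact MeasureTheory.integral_prod_swap (Ker a F c t x)

end S19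
open S19 in
/-- Density–flux identities for the linear dispersive flow: for a Schwartz datum with
compactly supported Fourier transform, the momentum and energy densities `P`, `E` are real
valued, the mass density `|u|²` has flux `P`, and `P` has flux `E`:
`∂_t |u|² = ∂_x P` and `∂_t P = ∂_x E`. -/
theorem stmt_19 (a : ℝ → ℝ) (ha : ContDiff ℝ (⊤ : ℕ∞) a)
    (f : SchwartzMap ℝ ℂ) (hf : HasCompactSupport (FT ⇑f)) :
    (∀ t x : ℝ, (Pdens a (FT ⇑f) t x).im = 0) ∧
    (∀ t x : ℝ, (Edens a (FT ⇑f) t x).im = 0) ∧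
    (∀ t x : ℝ,
      deriv (fun τ : ℝ => ((‖uEvol a (FT ⇑f) τ x‖ ^ 2 : ℝ) : ℂ)) t =
        deriv (fun y : ℝ => Pdens a (FT ⇑f) t y) x) ∧
    (∀ t x : ℝ,
      deriv (fun τ : ℝ => Pdens a (FT ⇑f) τ x) t =
        deriv (fun y : ℝ => Edens a (FT ⇑f) t y) x) := by
  have hFc : Continuous (FT ⇑f) := FT_cont f
  set F := FT ⇑f with hFdef
  have hFs : HasCompactSupport F := hf
  have hone : Sym F (fun _ _ => 1) := Sym.one hFs
  have hp : Sym F (psym a) := Sym.psym' hFs ha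
  have hp2 : Sym F (fun ξ η => psym a ξ η ^ 2) := by
    simpa [sq] using hp.mul hp
  have hPr : ∀ t x : ℝ, (Pdens a F t x).im = 0 := by
    intro t x
    rw [← Complex.conj_eq_iff_im, Pdens_eq a F t x (Ker_int ha.continuous hFc hFs hp t x),
      map_mul, map_inv₀, Complex.conj_ofReal,
      int_real a F (psym a) (fun ξ η => psym_symm a ξ η) t x]
  have hEr : ∀ t x : ℝ, (Edens a F t x).im = 0 := by
    intro t x
    rw [← Complex.conj_eq_iff_im, Edens_eq a F t x (Ker_int ha.continuous hFc hFs hp2 t x),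
      map_mul, map_inv₀, Complex.conj_ofReal,
      int_real a F (fun ξ η => psym a ξ η ^ 2) (fun ξ η => by show psym a ξ η ^ 2 = psym a η ξ ^ 2; rw [psym_symm]) t x]
  refine ⟨hPr, hEr, ?_, ?_⟩
  · intro t x
    have hL : (fun τ : ℝ => ((‖uEvol a F τ x‖ ^ 2 : ℝ) : ℂ)) =
        fun τ => (((2 * Real.pi) ^ 2 : ℝ) : ℂ)⁻¹ *
          ∫ q : ℝ × ℝ, Ker a F (fun _ _ => 1) τ x q :=
      funext fun τ => mass_eq a F τ x (Ker_int ha.continuous hFc hFs hone τ x)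
    have hR : (fun y : ℝ => Pdens a F t y) =
        fun y => (((2 * Real.pi) ^ 2 : ℝ) : ℂ)⁻¹ *
          ∫ q : ℝ × ℝ, Ker a F (psym a) t y q :=
      funext fun y => Pdens_eq a F t y (Ker_int ha.continuous hFc hFs hp t y)
    have hd1 := (hasDerivAt_int_t ha hFc hFs hone t x).const_mul
      ((((2 * Real.pi) ^ 2 : ℝ) : ℂ)⁻¹)
    have hd2 := (hasDerivAt_int_x ha hFc hFs hp t x).const_mul
      ((((2 * Real.pi) ^ 2 : ℝ) : ℂ)⁻¹)
    rw [hL, hR, hd1.deriv, hd2.deriv]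
    congr 1
    refine MeasureTheory.integral_congr_ae (Filter.Eventually.of_forall fun q => ?_)
    simpa [Ker] using Ker_flux a F (fun _ _ => 1) t x q
  · intro t x
    have hL : (fun τ : ℝ => Pdens a F τ x) =
        fun τ => (((2 * Real.pi) ^ 2 : ℝ) : ℂ)⁻¹ *
          ∫ q : ℝ × ℝ, Ker a F (psym a) τ x q :=
      funext fun τ => Pdens_eq a F τ x (Ker_int ha.continuous hFc hFs hp τ x)
    have hR : (fun y : ℝ => Edens a F t y) =
        fun y => (((2 * Real.pi) ^ 2 : ℝ) : ℂ)⁻¹ *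
          ∫ q : ℝ × ℝ, Ker a F (fun ξ η => psym a ξ η ^ 2) t y q :=
      funext fun y => Edens_eq a F t y (Ker_int ha.continuous hFc hFs hp2 t y)
    have hd1 := (hasDerivAt_int_t ha hFc hFs hp t x).const_mul
      ((((2 * Real.pi) ^ 2 : ℝ) : ℂ)⁻¹)
    have hd2 := (hasDerivAt_int_x ha hFc hFs hp2 t x).const_mul
      ((((2 * Real.pi) ^ 2 : ℝ) : ℂ)⁻¹)
    rw [hL, hR, hd1.deriv, hd2.deriv]
    congr 1
    refine MeasureTheory.integral_congr_ae (Filter.Eventually.of_forall fun q => ?_)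
    simpa [Ker, sq] using Ker_flux a F (psym a) t x q
end
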